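/- arXiv:2206.08775 — 4 statements merged into one kernel-verified Lean document; each statement's English description precedes it below -/
import Mathlib

section
/- Let A be a finitely generated group with a finite symmetric generating set S_A, and let B be a finite group with a finite symmetric generating set S_B. Then (A ≀ B, S_std) has unbounded depth if and only if (A,S_A) has unbounded depth, where S_std = S_A ∪ S_B is the standard generating set. -/
open scoped Classical

/-- The word length of `g` with respect to a generating set `S`: the least `n` such that
`g` is a product of `n` elements of `S`. -/
noncomputable def wordLength {G : Type*} [Group G] (S : Set G) (g : G) : ℕ :=
  sInf {n | ∃ l : List G, (∀ x ∈ l, x ∈ S) ∧ l.length = n ∧ l.prod = g}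

/-- `g` has depth at least `n` with respect to `S`: multiplying `g` by between `1` and `n`
generators of `S` never increases word length. -/
def HasDepthAtLeast {G : Type*} [Group G] (S : Set G) (g : G) (n : ℕ) : Prop :=
  ∀ l : List G, (∀ x ∈ l, x ∈ S) → 1 ≤ l.length → l.length ≤ n →
    wordLength S (g * l.prod) ≤ wordLength S g

/-- `(G, S)` has unbounded depth: for every `n` there is an element of depth at least `n`. -/
def UnboundedDepth {G : Type*} [Group G] (S : Set G) : Prop :=
  ∀ n : ℕ, ∃ g : G, HasDepthAtLeast S g n

/-- `S` is a finite symmetric generating set of `G`. -/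
structure IsSymmGen {G : Type*} [Group G] (S : Set G) : Prop where
  finite : S.Finite
  symm : ∀ s ∈ S, s⁻¹ ∈ S
  closure_eq_top : Subgroup.closure S = ⊤

/-- The group of finitely supported functions `B → A`, as a subgroup of the direct
product `B → A`. -/
def FinSuppSubgroup (A B : Type*) [Group A] : Subgroup (B → A) where
  carrier := {f | (Function.mulSupport f).Finite}
  one_mem' := by
    simp [Function.mulSupport_one]
  mul_mem' := by
    intro f g hf hg
    exact Set.Finite.subset (hf.union hg) (Function.mulSupport_mul f g)
  inv_mem' := by
    intro f hf
    simpa [Function.mulSupport_inv] using hf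

/-- Left translation by `b ∈ B` on finitely supported functions: `(b · f) x = f (b⁻¹ x)`. -/
def lampTranslate (A B : Type*) [Group A] [Group B] (b : B) :
    FinSuppSubgroup A B ≃* FinSuppSubgroup A B where
  toFun f := ⟨fun x => (f : B → A) (b⁻¹ * x), by
    have h : Function.mulSupport (fun x => (f : B → A) (b⁻¹ * x)) ⊆
        (fun x : B => b⁻¹ * x) ⁻¹' Function.mulSupport (f : B → A) := fun x hx => hx
    exact Set.Finite.subset
      (Set.Finite.preimage (Set.injOn_of_injective (mul_right_injective b⁻¹)) f.2) h⟩
  invFun f := ⟨fun x => (f : B → A) (b * x), by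
    have h : Function.mulSupport (fun x => (f : B → A) (b * x)) ⊆
        (fun x : B => b * x) ⁻¹' Function.mulSupport (f : B → A) := fun x hx => hx
    exact Set.Finite.subset
      (Set.Finite.preimage (Set.injOn_of_injective (mul_right_injective b)) f.2) h⟩
  left_inv f := Subtype.ext (funext fun x => by simp)
  right_inv f := Subtype.ext (funext fun x => by simp)
  map_mul' f g := rfl

/-- The action of `B` on finitely supported functions `B → A` by left translation. -/
def lampAction (A B : Type*) [Group A] [Group B] :
    B →* MulAut (FinSuppSubgroup A B) where
  toFun := lampTranslate A B
  map_one' := by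
    apply MulEquiv.ext
    intro f
    apply Subtype.ext
    funext x
    show (f : B → A) ((1 : B)⁻¹ * x) = (f : B → A) x
    simp
  map_mul' b c := by
    apply MulEquiv.ext
    intro f
    apply Subtype.ext
    funext x
    show (f : B → A) ((b * c)⁻¹ * x) = (f : B → A) (c⁻¹ * (b⁻¹ * x))
    rw [mul_inv_rev, mul_assoc]

/-- The restricted wreath product `A ≀ B`, i.e. the semidirect product
`(⨁_B A) ⋊ B` where `B` acts by left translation. -/
abbrev Wreath (A B : Type*) [Group A] [Group B] :=
  FinSuppSubgroup A B ⋊[lampAction A B] B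

/-- `δ_a`: the finitely supported function sending `1 ∈ B` to `a` and everything else
to `1 ∈ A`. -/
noncomputable def lampSingle (A B : Type*) [Group A] [Group B] (a : A) :
    FinSuppSubgroup A B :=
  ⟨fun x => if x = (1 : B) then a else 1, by
    apply Set.Finite.subset (Set.finite_singleton (1 : B))
    intro x hx
    simp only [Set.mem_singleton_iff]
    by_contra h
    exact hx (if_neg h)⟩

/-- The standard generating set `S_A ∪ S_B` of the wreath product `A ≀ B`, where
`a ∈ S_A` is identified with `(δ_a, 1)` and `b ∈ S_B` with `(𝟙, b)`. -/
noncomputable def stdGen {A B : Type*} [Group A] [Group B] (SA : Set A) (SB : Set B) :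
    Set (Wreath A B) :=
  ((fun a => SemidirectProduct.inl (lampSingle A B a)) '' SA) ∪
    ((fun b => SemidirectProduct.inr b) '' SB)


set_option linter.unusedSectionVars false

/-! ### Generic word length lemmas -/

lemma wordLength_le {G : Type*} [Group G] (S : Set G) {g : G} {l : List G}
    (h : ∀ x ∈ l, x ∈ S) (hp : l.prod = g) : wordLength S g ≤ l.length :=
  Nat.sInf_le ⟨l, h, rfl, hp⟩

lemma exists_word {G : Type*} [Group G] {S : Set G} (hsymm : ∀ s ∈ S, s⁻¹ ∈ S)
    (hS : Subgroup.closure S = ⊤) (g : G) :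
    ∃ l : List G, (∀ x ∈ l, x ∈ S) ∧ l.prod = g := by
  have hg : g ∈ Submonoid.closure (S ∪ S⁻¹) := by
    have : g ∈ (Subgroup.closure S).toSubmonoid := by rw [hS]; trivial
    rwa [Subgroup.closure_toSubmonoid] at this
  obtain ⟨l, hl, hp⟩ := Submonoid.exists_list_of_mem_closure hg
  refine ⟨l, fun x hx => ?_, hp⟩
  rcases hl x hx with h | h
  · exact h
  · simpa using hsymm _ h

lemma exists_min_word {G : Type*} [Group G] {S : Set G} {g : G}
    (hne : ∃ l : List G, (∀ x ∈ l, x ∈ S) ∧ l.prod = g) :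
    ∃ l : List G, (∀ x ∈ l, x ∈ S) ∧ l.prod = g ∧ l.length = wordLength S g := by
  obtain ⟨l0, h0, hp0⟩ := hne
  have hne' : {n | ∃ l : List G, (∀ x ∈ l, x ∈ S) ∧ l.length = n ∧ l.prod = g}.Nonempty :=
    ⟨l0.length, l0, h0, rfl, hp0⟩
  obtain ⟨l, hl, hlen, hp⟩ := Nat.sInf_mem hne'
  exact ⟨l, hl, hp, hlen⟩

lemma wordLength_one {G : Type*} [Group G] (S : Set G) : wordLength S (1 : G) = 0 :=
  Nat.le_zero.mp (wordLength_le S (l := []) (by simp) (by simp))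

lemma eq_one_of_wordLength_eq_zero {G : Type*} [Group G] {S : Set G} {g : G}
    (hne : ∃ l : List G, (∀ x ∈ l, x ∈ S) ∧ l.prod = g) (h : wordLength S g = 0) : g = 1 := by
  obtain ⟨l, -, hp, hlen⟩ := exists_min_word hne
  rw [h, List.length_eq_zero_iff] at hlen
  simp [hlen] at hp
  exact hp.symm

lemma wordLength_mul_le {G : Type*} [Group G] {S : Set G} {g h : G}
    (hg : ∃ l : List G, (∀ x ∈ l, x ∈ S) ∧ l.prod = g)
    (hh : ∃ l : List G, (∀ x ∈ l, x ∈ S) ∧ l.prod = h) :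
    wordLength S (g * h) ≤ wordLength S g + wordLength S h := by
  obtain ⟨lg, hlg, hpg, heng⟩ := exists_min_word hg
  obtain ⟨lh, hlh, hph, henh⟩ := exists_min_word hh
  have := wordLength_le S (g := g * h) (l := lg ++ lh)
    (by intro x hx; rcases List.mem_append.mp hx with h | h; exacts [hlg x h, hlh x h])
    (by simp [hpg, hph])
  simpa [heng, henh] using this

lemma unboundedDepth_of_finite {G : Type*} [Group G] [Finite G] (S : Set G) :
    UnboundedDepth S := by
  obtain ⟨g, hg⟩ := Finite.exists_max (wordLength S)
  exact fun n => ⟨g, fun l _ _ _ => hg _⟩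

/-! ### Walks in B -/

section Walks
variable {B : Type*} [Group B]

def visited (m : List B) : Set B := {p | ∃ t₁ t₂ : List B, m = t₁ ++ t₂ ∧ t₁.prod = p}

lemma one_mem_visited (m : List B) : (1 : B) ∈ visited m := ⟨[], m, rfl, rfl⟩

lemma prod_mem_visited (m : List B) : m.prod ∈ visited m := ⟨m, [], by simp, rfl⟩

lemma visited_nil : visited ([] : List B) = {1} := by
  ext p
  constructor
  · rintro ⟨t₁, t₂, hm, hp⟩
    have : t₁ = [] := by
      cases t₁ with
      | nil => rfl
      | cons a t => simp at hm
    simp [this] at hp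
    simp [hp.symm]
  · rintro rfl
    exact one_mem_visited _

lemma mem_visited_cons {β : B} {m : List B} {p : B} :
    p ∈ visited (β :: m) ↔ p = 1 ∨ ∃ q ∈ visited m, p = β * q := by
  constructor
  · rintro ⟨t₁, t₂, hm, hp⟩
    cases t₁ with
    | nil => left; simpa using hp.symm
    | cons a t =>
      right
      simp only [List.cons_append, List.cons.injEq] at hm
      exact ⟨t.prod, ⟨t, t₂, hm.2, rfl⟩, by simp [← hp, hm.1]⟩
  · rintro (rfl | ⟨q, ⟨t₁, t₂, hm, hq⟩, rfl⟩)
    · exact one_mem_visited _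
    · exact ⟨β :: t₁, t₂, by simp [hm], by simp [hq]⟩

lemma visited_append_left (m₁ m₂ : List B) : visited m₁ ⊆ visited (m₁ ++ m₂) := by
  rintro p ⟨t₁, t₂, hm, hp⟩
  exact ⟨t₁, t₂ ++ m₂, by simp [hm], hp⟩

lemma exists_cover_walk_aux {SB : Set B} (hsymm : ∀ s ∈ SB, s⁻¹ ∈ SB)
    (hSB : Subgroup.closure SB = ⊤) (s : List B) (b : B) :
    ∃ m : List B, (∀ x ∈ m, x ∈ SB) ∧ m.prod = b ∧ ∀ q ∈ s, q ∈ visited m := by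
  induction s generalizing b with
  | nil =>
    obtain ⟨m, hm, hp⟩ := exists_word hsymm hSB b
    exact ⟨m, hm, hp, by simp⟩
  | cons p rest ih =>
    obtain ⟨m₁, hm₁, hp₁, hcov⟩ := ih p
    obtain ⟨m₂, hm₂, hp₂⟩ := exists_word hsymm hSB (p⁻¹ * b)
    refine ⟨m₁ ++ m₂, ?_, by simp [hp₁, hp₂], ?_⟩
    · intro x hx; rcases List.mem_append.mp hx with h | h; exacts [hm₁ x h, hm₂ x h]
    · intro q hq
      rcases List.mem_cons.mp hq with rfl | h
      · exact visited_append_left m₁ m₂ (hp₁ ▸ prod_mem_visited m₁)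
      · exact visited_append_left m₁ m₂ (hcov q h)

lemma exists_cover_walk [Finite B] {SB : Set B} (hsymm : ∀ s ∈ SB, s⁻¹ ∈ SB)
    (hSB : Subgroup.closure SB = ⊤) (b : B) :
    ∃ m : List B, (∀ x ∈ m, x ∈ SB) ∧ m.prod = b ∧ ∀ q : B, q ∈ visited m := by
  haveI := Fintype.ofFinite B
  obtain ⟨m, h1, h2, h3⟩ := exists_cover_walk_aux hsymm hSB Finset.univ.toList b
  exact ⟨m, h1, h2, fun q => h3 q (by simp)⟩

end Walks

/-! ### Coercion lemmas for the wreath product -/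

section Basic
variable {A B : Type*} [Group A] [Group B]

@[simp] lemma finSupp_coe_mul (f g : FinSuppSubgroup A B) (x : B) :
    ((f * g : FinSuppSubgroup A B) : B → A) x = (f : B → A) x * (g : B → A) x := rfl

@[simp] lemma finSupp_coe_inv (f : FinSuppSubgroup A B) (x : B) :
    ((f⁻¹ : FinSuppSubgroup A B) : B → A) x = ((f : B → A) x)⁻¹ := rfl

@[simp] lemma finSupp_coe_one (x : B) : ((1 : FinSuppSubgroup A B) : B → A) x = 1 := rfl

@[simp] lemma lampAction_apply (b : B) (f : FinSuppSubgroup A B) (x : B) :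
    ((lampAction A B b f : FinSuppSubgroup A B) : B → A) x = (f : B → A) (b⁻¹ * x) := rfl

@[simp] lemma lampSingle_apply (a : A) (x : B) :
    ((lampSingle A B a : FinSuppSubgroup A B) : B → A) x = if x = 1 then a else 1 := rfl

/-- `lampSingle` as a monoid hom. -/
noncomputable def lampHom : A →* FinSuppSubgroup A B where
  toFun := lampSingle A B
  map_one' := by
    apply Subtype.ext; funext x
    simp
  map_mul' a b := by
    apply Subtype.ext; funext x
    by_cases hx : x = 1 <;> simp [hx]

@[simp] lemma lampHom_apply (a : A) (x : B) :
    ((lampHom a : FinSuppSubgroup A B) : B → A) x = if x = 1 then a else 1 := rfl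

lemma mem_stdGen_inl {SA : Set A} (SB : Set B) {a : A} (ha : a ∈ SA) :
    SemidirectProduct.inl (lampSingle A B a) ∈ stdGen SA SB :=
  Set.mem_union_left _ ⟨a, ha, rfl⟩

lemma mem_stdGen_inr (SA : Set A) {SB : Set B} {b : B} (hb : b ∈ SB) :
    SemidirectProduct.inr b ∈ stdGen SA SB :=
  Set.mem_union_right _ ⟨b, hb, rfl⟩

end Basic

/-! ### Structure of wreath product words -/

section Wreath
variable {A B : Type*} [Group A] [Group B]

/-- Every element `y`'s lamp value after a word is a product of at most `l.length`
generators of `SA`. -/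
lemma wreath_lamp {SA : Set A} {SB : Set B} :
    ∀ l : List (Wreath A B), (∀ x ∈ l, x ∈ stdGen SA SB) → ∀ y : B,
      ∃ t : List A, (∀ x ∈ t, x ∈ SA) ∧ t.length ≤ l.length ∧
        t.prod = ((l.prod.left : FinSuppSubgroup A B) : B → A) y := by
  intro l
  induction l with
  | nil => intro _ y; exact ⟨[], by simp, by simp, by simp⟩
  | cons s r ih =>
    intro hl y
    have hs := hl s List.mem_cons_self
    have hr : ∀ x ∈ r, x ∈ stdGen SA SB := fun x hx => hl x (List.mem_cons_of_mem s hx)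
    rcases hs with ⟨a, ha, rfl⟩ | ⟨β, hβ, rfl⟩
    · -- lamp generator
      by_cases hy : y = 1
      · obtain ⟨t, ht, hlen, hp⟩ := ih hr y
        refine ⟨a :: t, ?_, by simpa using Nat.succ_le_succ hlen, ?_⟩
        · intro x hx; rcases List.mem_cons.mp hx with rfl | hx
          exacts [ha, ht x hx]
        · simp [hy, hp, SemidirectProduct.mul_left]
      · obtain ⟨t, ht, hlen, hp⟩ := ih hr y
        refine ⟨t, ht, hlen.trans (by simp), ?_⟩
        simp [hy, hp, SemidirectProduct.mul_left]
    · -- move generator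
      obtain ⟨t, ht, hlen, hp⟩ := ih hr (β⁻¹ * y)
      refine ⟨t, ht, hlen.trans (by simp), ?_⟩
      simp [hp, SemidirectProduct.mul_left]

end Wreath

section WreathLB
variable {A B : Type*} [Group A] [Group B] [Fintype B]

lemma wreath_lb {SA : Set A} {SB : Set B}
    (hsymmA : ∀ s ∈ SA, s⁻¹ ∈ SA) (hSA : Subgroup.closure SA = ⊤) :
    ∀ l : List (Wreath A B), (∀ x ∈ l, x ∈ stdGen SA SB) →
      ∃ m : List B, (∀ x ∈ m, x ∈ SB) ∧ m.prod = l.prod.right ∧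
        Function.mulSupport ((l.prod.left : FinSuppSubgroup A B) : B → A) ⊆ visited m ∧
        m.length + ∑ x : B, wordLength SA (((l.prod.left : FinSuppSubgroup A B) : B → A) x)
          ≤ l.length := by
  intro l
  induction l with
  | nil =>
    intro _
    refine ⟨[], by simp, by simp, ?_, by simp [wordLength_one]⟩
    intro x hx
    simp [Function.mem_mulSupport] at hx
  | cons s r ih =>
    intro hl
    have hs := hl s List.mem_cons_self
    have hr : ∀ x ∈ r, x ∈ stdGen SA SB := fun x hx => hl x (List.mem_cons_of_mem s hx)
    obtain ⟨m, hmS, hmp, hmsupp, hmlen⟩ := ih hr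
    simp only [List.prod_cons]
    set F : FinSuppSubgroup A B := r.prod.left with hF
    rcases hs with ⟨a, ha, rfl⟩ | ⟨β, hβ, rfl⟩
    · -- lamp generator: same walk
      have hleft : ((SemidirectProduct.inl (lampSingle A B a) * r.prod).left :
          FinSuppSubgroup A B) = lampSingle A B a * F := by
        simp [SemidirectProduct.mul_left, hF]
      have hright : (SemidirectProduct.inl (lampSingle A B a) * r.prod).right
          = r.prod.right := by simp
      refine ⟨m, hmS, by rw [hright]; exact hmp, ?_, ?_⟩
      · rw [hleft]
        intro x hx
        by_cases hx1 : x = 1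
        · exact hx1 ▸ one_mem_visited m
        · apply hmsupp
          simp only [Function.mem_mulSupport] at hx ⊢
          intro hFx
          apply hx
          simp [hx1, hFx]
      · rw [hleft]
        have hsum : ∑ x : B, wordLength SA (((lampSingle A B a * F :
            FinSuppSubgroup A B) : B → A) x)
            ≤ 1 + ∑ x : B, wordLength SA ((F : B → A) x) := by
          have h1 : ∀ x : B, x ≠ 1 → wordLength SA (((lampSingle A B a * F :
              FinSuppSubgroup A B) : B → A) x) = wordLength SA ((F : B → A) x) := by
            intro x hx; simp [hx]
          rw [← Finset.add_sum_erase Finset.univ _ (Finset.mem_univ (1 : B)),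
            ← Finset.add_sum_erase Finset.univ (fun x => wordLength SA ((F : B → A) x))
              (Finset.mem_univ (1 : B))]
          have h2 : ∑ x ∈ Finset.univ.erase (1 : B),
              wordLength SA (((lampSingle A B a * F : FinSuppSubgroup A B) : B → A) x)
              = ∑ x ∈ Finset.univ.erase (1 : B), wordLength SA ((F : B → A) x) :=
            Finset.sum_congr rfl fun x hx => h1 x (Finset.ne_of_mem_erase hx)
          rw [h2]
          have h3 : wordLength SA (((lampSingle A B a * F :
              FinSuppSubgroup A B) : B → A) 1) ≤ 1 + wordLength SA ((F : B → A) 1) := by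
            have := wordLength_mul_le (g := a) (h := (F : B → A) 1)
              (exists_word hsymmA hSA a) (exists_word hsymmA hSA ((F : B → A) 1))
            have ha1 : wordLength SA a ≤ 1 := wordLength_le SA (l := [a]) (by simpa) (by simp)
            calc wordLength SA (((lampSingle A B a * F : FinSuppSubgroup A B) : B → A) 1)
                = wordLength SA (a * (F : B → A) 1) := by simp
              _ ≤ wordLength SA a + wordLength SA ((F : B → A) 1) := this
              _ ≤ 1 + wordLength SA ((F : B → A) 1) := by omega
          omega
        simp only [List.length_cons]
        omega
    · -- move generator: extend walk
      have hleft : ((SemidirectProduct.inr β * r.prod).left : FinSuppSubgroup A B)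
          = lampAction A B β F := by
        simp [SemidirectProduct.mul_left, hF]
      have hright : (SemidirectProduct.inr β * r.prod).right = β * r.prod.right := by simp
      refine ⟨β :: m, ?_, ?_, ?_, ?_⟩
      · intro x hx; rcases List.mem_cons.mp hx with rfl | hx
        exacts [hβ, hmS x hx]
      · rw [hright]; simp [hmp]
      · rw [hleft]
        intro x hx
        simp only [Function.mem_mulSupport, lampAction_apply] at hx
        rw [mem_visited_cons]
        right
        exact ⟨β⁻¹ * x, hmsupp hx, by simp⟩
      · rw [hleft]
        have hsum : ∑ x : B, wordLength SA (((lampAction A B β F :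
            FinSuppSubgroup A B) : B → A) x) = ∑ x : B, wordLength SA ((F : B → A) x) := by
          simp only [lampAction_apply]
          exact Equiv.sum_comp (Equiv.mulLeft β⁻¹) (fun y => wordLength SA ((F : B → A) y))
        rw [hsum]
        simp only [List.length_cons]
        omega

end WreathLB

section WreathUB
variable {A B : Type*} [Group A] [Group B] [Fintype B]

lemma wreath_ub {SA : Set A} {SB : Set B}
    (hsymmA : ∀ s ∈ SA, s⁻¹ ∈ SA) (hSA : Subgroup.closure SA = ⊤) :
    ∀ (m : List B) (f : FinSuppSubgroup A B), (∀ x ∈ m, x ∈ SB) →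
      Function.mulSupport (f : B → A) ⊆ visited m →
      ∃ l : List (Wreath A B), (∀ x ∈ l, x ∈ stdGen SA SB) ∧
        l.prod = ⟨f, m.prod⟩ ∧
        l.length ≤ (∑ x : B, wordLength SA ((f : B → A) x)) + m.length := by
  intro m
  induction m with
  | nil =>
    intro f _ hsupp
    rw [visited_nil] at hsupp
    obtain ⟨t, ht, htp, htlen⟩ := exists_min_word (exists_word hsymmA hSA ((f : B → A) 1))
    refine ⟨t.map (fun a => SemidirectProduct.inl (lampSingle A B a)), ?_, ?_, ?_⟩
    · intro x hx
      obtain ⟨a, ha, rfl⟩ := List.mem_map.mp hx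
      exact mem_stdGen_inl SB (ht a ha)
    · have : t.map (fun a => SemidirectProduct.inl (lampSingle A B a))
          = t.map ((SemidirectProduct.inl (φ := lampAction A B)).comp lampHom) := rfl
      rw [this, ← map_list_prod]
      have hf : (lampHom t.prod : FinSuppSubgroup A B) = f := by
        apply Subtype.ext; funext x
        by_cases hx : x = 1
        · simp [hx, htp]
        · have : x ∉ Function.mulSupport (f : B → A) := fun hc => hx (hsupp hc)
          simp only [Function.mem_mulSupport, not_not] at this
          simp [hx, this]
      rw [MonoidHom.comp_apply, hf]
      rfl
    · rw [List.length_map, htlen, List.length_nil, add_zero]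
      exact Finset.single_le_sum (f := fun x => wordLength SA ((f : B → A) x))
        (fun i _ => Nat.zero_le _) (Finset.mem_univ (1 : B))
  | cons β m' ih =>
    intro f hm hsupp
    have hm' : ∀ x ∈ m', x ∈ SB := fun x hx => hm x (List.mem_cons_of_mem β hx)
    set g1 : A := (f : B → A) 1 with hg1
    set d : FinSuppSubgroup A B := lampHom g1 with hd
    set f' : FinSuppSubgroup A B := lampAction A B β⁻¹ (d⁻¹ * f) with hf'
    have hsupp' : Function.mulSupport (f' : B → A) ⊆ visited m' := by
      intro x hx
      simp only [Function.mem_mulSupport, hf', lampAction_apply, inv_inv,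
        finSupp_coe_mul, finSupp_coe_inv, hd, lampHom_apply] at hx
      by_cases hβx : β * x = 1
      · rw [if_pos hβx] at hx
        rw [hβx] at hx
        simp [hg1] at hx
      · rw [if_neg hβx] at hx
        simp only [inv_one, one_mul] at hx
        have hmem : β * x ∈ Function.mulSupport (f : B → A) := by
          simpa [Function.mem_mulSupport] using hx
        have := hsupp hmem
        rw [mem_visited_cons] at this
        rcases this with h1 | ⟨q, hq, heq⟩
        · exact absurd h1 hβx
        · have : x = q := by
            have := mul_left_cancel heq
            exact this
          exact this ▸ hq
    obtain ⟨l', hl'S, hl'p, hl'len⟩ := ih f' hm' hsupp'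
    obtain ⟨t, ht, htp, htlen⟩ := exists_min_word (exists_word hsymmA hSA g1)
    refine ⟨t.map (fun a => SemidirectProduct.inl (lampSingle A B a))
      ++ SemidirectProduct.inr β :: l', ?_, ?_, ?_⟩
    · intro x hx
      rcases List.mem_append.mp hx with hx | hx
      · obtain ⟨a, ha, rfl⟩ := List.mem_map.mp hx
        exact mem_stdGen_inl SB (ht a ha)
      · rcases List.mem_cons.mp hx with rfl | hx
        exacts [mem_stdGen_inr SA (hm β List.mem_cons_self), hl'S x hx]
    · rw [List.prod_append, List.prod_cons]
      have h1 : (t.map (fun a => SemidirectProduct.inl (lampSingle A B a))).prod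
          = SemidirectProduct.inl (φ := lampAction A B) d := by
        have : t.map (fun a => SemidirectProduct.inl (lampSingle A B a))
            = t.map ((SemidirectProduct.inl (φ := lampAction A B)).comp lampHom) := rfl
        rw [this, ← map_list_prod, MonoidHom.comp_apply, htp]
      rw [h1, hl'p]
      apply SemidirectProduct.ext
      · simp only [SemidirectProduct.mul_left, SemidirectProduct.left_inl,
          SemidirectProduct.right_inl, SemidirectProduct.left_inr,
          SemidirectProduct.right_inr, map_one, MulAut.one_apply, one_mul]
        apply Subtype.ext; funext x
        simp only [finSupp_coe_mul, lampAction_apply, hf', inv_inv, finSupp_coe_inv]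
        rw [mul_inv_cancel_left]
        simp
      · show 1 * (β * m'.prod) = (β :: m').prod
        rw [List.prod_cons, one_mul]
    · have hlen1 : (t.map (fun a => SemidirectProduct.inl (φ := lampAction A B)
          (lampSingle A B a))).length = wordLength SA g1 := by
        rw [List.length_map, htlen]
      have hsum : wordLength SA g1 + ∑ x : B, wordLength SA ((f' : B → A) x)
          = ∑ x : B, wordLength SA ((f : B → A) x) := by
        have e1 : ∑ x : B, wordLength SA ((f' : B → A) x)
            = ∑ x : B, wordLength SA (((d⁻¹ * f : FinSuppSubgroup A B) : B → A) x) := by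
          simp only [hf', lampAction_apply, inv_inv]
          exact Equiv.sum_comp (Equiv.mulLeft β)
            (fun y => wordLength SA (((d⁻¹ * f : FinSuppSubgroup A B) : B → A) y))
        rw [e1,
          ← Finset.add_sum_erase Finset.univ
            (fun x => wordLength SA (((d⁻¹ * f : FinSuppSubgroup A B) : B → A) x))
            (Finset.mem_univ (1 : B)),
          ← Finset.add_sum_erase Finset.univ (fun x => wordLength SA ((f : B → A) x))
            (Finset.mem_univ (1 : B))]
        have e2 : wordLength SA (((d⁻¹ * f : FinSuppSubgroup A B) : B → A) 1) = 0 := by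
          simp [hd, hg1, wordLength_one]
        have e3 : ∑ x ∈ Finset.univ.erase (1 : B),
            wordLength SA (((d⁻¹ * f : FinSuppSubgroup A B) : B → A) x)
            = ∑ x ∈ Finset.univ.erase (1 : B), wordLength SA ((f : B → A) x) := by
          refine Finset.sum_congr rfl fun x hx => ?_
          have hx1 := Finset.ne_of_mem_erase hx
          simp [hd, hx1]
        rw [e2, e3, ← hg1]
        omega
      rw [List.length_append, List.length_cons, hlen1]
      simp only [List.length_cons]
      omega

end WreathUB

/-! ### Cost of covering walks, and the two-sided word length estimates -/

noncomputable def Cost {B : Type*} [Group B] (SB : Set B) (b : B) : ℕ :=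
  sInf {k | ∃ m : List B, (∀ x ∈ m, x ∈ SB) ∧ m.length = k ∧ m.prod = b ∧
    ∀ q : B, q ∈ visited m}

lemma cost_spec {B : Type*} [Group B] [Finite B] {SB : Set B}
    (hsymm : ∀ s ∈ SB, s⁻¹ ∈ SB) (hSB : Subgroup.closure SB = ⊤) (b : B) :
    ∃ m : List B, (∀ x ∈ m, x ∈ SB) ∧ m.length = Cost SB b ∧ m.prod = b ∧
      ∀ q : B, q ∈ visited m := by
  have hne : {k | ∃ m : List B, (∀ x ∈ m, x ∈ SB) ∧ m.length = k ∧ m.prod = b ∧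
      ∀ q : B, q ∈ visited m}.Nonempty := by
    obtain ⟨m, h1, h2, h3⟩ := exists_cover_walk hsymm hSB b
    exact ⟨m.length, m, h1, rfl, h2, h3⟩
  exact Nat.sInf_mem hne

lemma cost_le {B : Type*} [Group B] {SB : Set B} {m : List B} (hm : ∀ x ∈ m, x ∈ SB)
    (hcov : ∀ q : B, q ∈ visited m) : Cost SB m.prod ≤ m.length :=
  Nat.sInf_le ⟨m, hm, rfl, rfl, hcov⟩

section Estimates
variable {A B : Type*} [Group A] [Group B] [Fintype B] {SA : Set A} {SB : Set B}

lemma wreath_exists_word (hsymmA : ∀ s ∈ SA, s⁻¹ ∈ SA) (hSA : Subgroup.closure SA = ⊤)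
    (hsymmB : ∀ s ∈ SB, s⁻¹ ∈ SB) (hSB : Subgroup.closure SB = ⊤) (w : Wreath A B) :
    ∃ l : List (Wreath A B), (∀ x ∈ l, x ∈ stdGen SA SB) ∧ l.prod = w := by
  obtain ⟨m, h1, h2, h3, h4⟩ := cost_spec hsymmB hSB w.right
  obtain ⟨l, hlS, hlp, -⟩ := wreath_ub hsymmA hSA m w.left h1 (fun x _ => h4 x)
  exact ⟨l, hlS, by rw [hlp, h3]⟩

lemma wreath_wordLength_le (hsymmA : ∀ s ∈ SA, s⁻¹ ∈ SA) (hSA : Subgroup.closure SA = ⊤)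
    (hsymmB : ∀ s ∈ SB, s⁻¹ ∈ SB) (hSB : Subgroup.closure SB = ⊤) (w : Wreath A B) :
    wordLength (stdGen SA SB) w
      ≤ (∑ x : B, wordLength SA ((w.left : B → A) x)) + Cost SB w.right := by
  obtain ⟨m, h1, h2, h3, h4⟩ := cost_spec hsymmB hSB w.right
  obtain ⟨l, hlS, hlp, hllen⟩ := wreath_ub hsymmA hSA m w.left h1 (fun x _ => h4 x)
  have hw : l.prod = w := by rw [hlp, h3]
  calc wordLength (stdGen SA SB) w ≤ l.length := wordLength_le _ hlS hw
    _ ≤ (∑ x : B, wordLength SA ((w.left : B → A) x)) + m.length := hllen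
    _ = _ := by rw [h2]

lemma sum_lamp_le_wordLength (hsymmA : ∀ s ∈ SA, s⁻¹ ∈ SA) (hSA : Subgroup.closure SA = ⊤)
    (hsymmB : ∀ s ∈ SB, s⁻¹ ∈ SB) (hSB : Subgroup.closure SB = ⊤) (w : Wreath A B) :
    ∑ x : B, wordLength SA ((w.left : B → A) x) ≤ wordLength (stdGen SA SB) w := by
  obtain ⟨l, hlS, hlp, hllen⟩ :=
    exists_min_word (wreath_exists_word hsymmA hSA hsymmB hSB w)
  obtain ⟨m, -, -, -, hmlen⟩ := wreath_lb hsymmA hSA l hlS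
  rw [hlp] at hmlen
  omega

lemma cost_add_sum_le_wordLength (hsymmA : ∀ s ∈ SA, s⁻¹ ∈ SA)
    (hSA : Subgroup.closure SA = ⊤) (hsymmB : ∀ s ∈ SB, s⁻¹ ∈ SB)
    (hSB : Subgroup.closure SB = ⊤) (w : Wreath A B)
    (hfull : ∀ x : B, (w.left : B → A) x ≠ 1) :
    Cost SB w.right + ∑ x : B, wordLength SA ((w.left : B → A) x)
      ≤ wordLength (stdGen SA SB) w := by
  obtain ⟨l, hlS, hlp, hllen⟩ :=
    exists_min_word (wreath_exists_word hsymmA hSA hsymmB hSB w)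
  obtain ⟨m, hmS, hmp, hmsupp, hmlen⟩ := wreath_lb hsymmA hSA l hlS
  rw [hlp] at hmp hmsupp hmlen
  have hcost : Cost SB w.right ≤ m.length := by
    rw [← hmp]
    exact cost_le hmS (fun q => hmsupp (hfull q))
  omega

/-- Iterated length-increasing words. -/
lemma iter_bad {n : ℕ}
    (hbad : ∀ g : A, ∃ l : List A, (∀ x ∈ l, x ∈ SA) ∧ 1 ≤ l.length ∧ l.length ≤ n ∧
      wordLength SA g < wordLength SA (g * l.prod)) :
    ∀ (k : ℕ) (g : A), ∃ u : List A, (∀ x ∈ u, x ∈ SA) ∧ k ≤ u.length ∧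
      u.length ≤ n * k ∧ wordLength SA g + k ≤ wordLength SA (g * u.prod) := by
  intro k
  induction k with
  | zero => intro g; exact ⟨[], by simp, by simp, by simp, by simp⟩
  | succ k ih =>
    intro g
    obtain ⟨u, huS, hul, hun, huw⟩ := ih g
    obtain ⟨l, hlS, hl1, hln, hlw⟩ := hbad (g * u.prod)
    refine ⟨u ++ l, ?_, ?_, ?_, ?_⟩
    · intro x hx; rcases List.mem_append.mp hx with h | h; exacts [huS x h, hlS x h]
    · simp only [List.length_append]; omega
    · simp only [List.length_append]; rw [Nat.mul_succ]; omega
    · rw [List.prod_append, ← mul_assoc]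
      omega

end Estimates

/-- For `B` a finite group, `(A ≀ B, S_A ∪ S_B)` has unbounded depth iff `(A, S_A)`
does. -/
theorem wreath_finite_base_unboundedDepth_iff {A B : Type*} [Group A] [Group B] [Finite B]
    (SA : Set A) (SB : Set B) (hSA : IsSymmGen SA) (hSB : IsSymmGen SB) :
    UnboundedDepth (stdGen SA SB) ↔ UnboundedDepth SA := by
  classical
  obtain ⟨-, hsymmA, hclosA⟩ := hSA
  obtain ⟨-, hsymmB, hclosB⟩ := hSB
  by_cases hA : Finite A
  · haveI : Finite (Wreath A B) :=
      Finite.of_injective (fun w : Wreath A B => (w.left, w.right))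
        (fun w1 w2 h => SemidirectProduct.ext (congrArg Prod.fst h) (congrArg Prod.snd h))
    exact ⟨fun _ => unboundedDepth_of_finite SA, fun _ => unboundedDepth_of_finite _⟩
  · haveI : Infinite A := not_finite_iff_infinite.mp hA
    haveI : Fintype B := Fintype.ofFinite B
    constructor
    · -- wreath unbounded → A unbounded
      intro hW
      by_contra hAd
      obtain ⟨n, hn⟩ := not_forall.mp hAd
      have hbad : ∀ g : A, ∃ l : List A, (∀ x ∈ l, x ∈ SA) ∧ 1 ≤ l.length ∧
          l.length ≤ n ∧ wordLength SA g < wordLength SA (g * l.prod) := by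
        intro g
        have h := forall_not_of_not_exists hn g
        unfold HasDepthAtLeast at h
        push_neg at h
        obtain ⟨l, h1, h2, h3, h4⟩ := h
        exact ⟨l, h1, h2, h3, h4⟩
      obtain ⟨bD, hbD⟩ := Finite.exists_max (wordLength SB)
      obtain ⟨bC, hbC⟩ := Finite.exists_max (Cost SB)
      set k : ℕ := Cost SB bC + 1 with hk
      set N : ℕ := wordLength SB bD + n * k with hN
      obtain ⟨w, hw⟩ := hW N
      set f : FinSuppSubgroup A B := w.left with hf
      set b : B := w.right with hb
      obtain ⟨mB, hmBS, hmBp, hmBlen⟩ := exists_min_word (exists_word hsymmB hclosB b⁻¹)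
      obtain ⟨u, huS, huk, hun, huw⟩ := iter_bad hbad k ((f : B → A) 1)
      set l : List (Wreath A B) :=
        mB.map (fun x => SemidirectProduct.inr (φ := lampAction A B) x)
          ++ u.map (fun a => SemidirectProduct.inl (φ := lampAction A B)
            (lampSingle A B a)) with hl
      have hlS : ∀ x ∈ l, x ∈ stdGen SA SB := by
        intro x hx
        rcases List.mem_append.mp hx with hx | hx
        · obtain ⟨y, hy, rfl⟩ := List.mem_map.mp hx
          exact mem_stdGen_inr SA (hmBS y hy)
        · obtain ⟨y, hy, rfl⟩ := List.mem_map.mp hx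
          exact mem_stdGen_inl SB (huS y hy)
      have hl1 : 1 ≤ l.length := by
        simp only [hl, List.length_append, List.length_map]
        omega
      have hlN : l.length ≤ N := by
        simp only [hl, List.length_append, List.length_map]
        have := hbD b⁻¹
        omega
      have hdep := hw l hlS hl1 hlN
      -- compute the product
      have hlp : l.prod = SemidirectProduct.inr b⁻¹
          * SemidirectProduct.inl (lampHom u.prod) := by
        rw [hl, List.prod_append]
        congr 1
        · have : mB.map (fun x => SemidirectProduct.inr (φ := lampAction A B) x)
              = mB.map (SemidirectProduct.inr (φ := lampAction A B)) := rfl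
          rw [this, ← map_list_prod, hmBp]
        · have : u.map (fun a => SemidirectProduct.inl (φ := lampAction A B)
              (lampSingle A B a))
              = u.map ((SemidirectProduct.inl (φ := lampAction A B)).comp lampHom) := rfl
          rw [this, ← map_list_prod]
          rfl
      have hwr : (w * l.prod).right = 1 := by
        rw [SemidirectProduct.mul_right, hlp]
        simp [← hb]
      have hwl : ((w * l.prod).left : FinSuppSubgroup A B) = f * lampHom u.prod := by
        rw [SemidirectProduct.mul_left, hlp]
        apply Subtype.ext; funext x
        simp only [SemidirectProduct.mul_left, SemidirectProduct.left_inr,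
          SemidirectProduct.right_inr, SemidirectProduct.left_inl, one_mul,
          finSupp_coe_mul, lampAction_apply, ← hb, ← hf]
        rw [inv_inv, mul_inv_cancel_left]
      -- lower bound on the perturbed element
      have hlow : ∑ x : B, wordLength SA (((w * l.prod).left : B → A) x)
          ≤ wordLength (stdGen SA SB) (w * l.prod) :=
        sum_lamp_le_wordLength hsymmA hclosA hsymmB hclosB _
      have hsplit : ∑ x : B, wordLength SA (((w * l.prod).left : B → A) x)
          = wordLength SA ((f : B → A) 1 * u.prod)
            + ∑ x ∈ Finset.univ.erase (1 : B), wordLength SA ((f : B → A) x) := by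
        rw [← Finset.add_sum_erase Finset.univ _ (Finset.mem_univ (1 : B))]
        congr 1
        · rw [hwl]; simp
        · refine Finset.sum_congr rfl fun x hx => ?_
          have hx1 := Finset.ne_of_mem_erase hx
          rw [hwl]
          simp [hx1]
      -- upper bound on w
      have hup : wordLength (stdGen SA SB) w
          ≤ (∑ x : B, wordLength SA ((f : B → A) x)) + Cost SB bC := by
        have h1 := wreath_wordLength_le hsymmA hclosA hsymmB hclosB w
        have h2 := hbC w.right
        rw [← hf] at h1
        omega
      have hsplit2 : ∑ x : B, wordLength SA ((f : B → A) x)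
          = wordLength SA ((f : B → A) 1)
            + ∑ x ∈ Finset.univ.erase (1 : B), wordLength SA ((f : B → A) x) :=
        (Finset.add_sum_erase Finset.univ _ (Finset.mem_univ (1 : B))).symm
      omega
    · -- A unbounded → wreath unbounded
      intro hAd n
      obtain ⟨g, hgdeep'⟩ := hAd (max n 1)
      have hgdeep : HasDepthAtLeast SA g n := fun l h h1 h2 =>
        hgdeep' l h h1 (h2.trans (le_max_left n 1))
      -- g ≠ 1
      have hg1 : g ≠ 1 := by
        intro hg
        have hs : ∃ s ∈ SA, s ≠ 1 := by
          by_contra hc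
          push_neg at hc
          have : SA ⊆ {(1 : A)} := fun s hsm => hc s hsm
          have hbot : Subgroup.closure SA ≤ ⊥ := by
            rw [← Subgroup.closure_singleton_one]
            exact Subgroup.closure_mono this
          rw [hclosA] at hbot
          obtain ⟨a, ha⟩ := exists_ne (1 : A)
          exact ha (Subgroup.mem_bot.mp (hbot (Subgroup.mem_top a)))
        obtain ⟨s, hsm, hs1⟩ := hs
        have := hgdeep' [s] (by simpa) (by simp) (by simp)
        rw [hg, List.prod_singleton, one_mul, wordLength_one] at this
        exact hs1 (eq_one_of_wordLength_eq_zero (exists_word hsymmA hclosA s)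
          (Nat.le_zero.mp this))
      set f : FinSuppSubgroup A B := ⟨fun _ => g, Set.toFinite _⟩ with hf
      obtain ⟨bC, hbC⟩ := Finite.exists_max (Cost SB)
      refine ⟨⟨f, bC⟩, ?_⟩
      intro l hlS hl1 hln
      -- upper bound on the perturbed element
      have hup := wreath_wordLength_le hsymmA hclosA hsymmB hclosB
        ((⟨f, bC⟩ : Wreath A B) * l.prod)
      have hsum : ∑ x : B, wordLength SA ((((⟨f, bC⟩ : Wreath A B) * l.prod).left : B → A) x)
          ≤ ∑ x : B, wordLength SA ((f : B → A) x) := by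
        refine Finset.sum_le_sum fun x _ => ?_
        have hx : (((⟨f, bC⟩ : Wreath A B) * l.prod).left : B → A) x
            = g * ((l.prod.left : FinSuppSubgroup A B) : B → A) (bC⁻¹ * x) := by
          simp [SemidirectProduct.mul_left, hf]
        rw [hx]
        obtain ⟨t, htS, htlen, htp⟩ := wreath_lamp l hlS (bC⁻¹ * x)
        rw [← htp]
        by_cases ht : t = []
        · simp [ht, hf]
        · have h1t : 1 ≤ t.length := by
            have := List.length_pos_iff.mpr ht
            omega
          have := hgdeep t htS h1t (htlen.trans hln)
          simpa [hf] using this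
      have hcost : Cost SB (((⟨f, bC⟩ : Wreath A B) * l.prod).right) ≤ Cost SB bC :=
        hbC _
      -- lower bound on the base element
      have hlow := cost_add_sum_le_wordLength hsymmA hclosA hsymmB hclosB
        (⟨f, bC⟩ : Wreath A B) (fun x => by simpa [hf] using hg1)
      simp only [] at hlow
      have hsum2 : ∑ x : B, wordLength SA ((f : B → A) x) = ∑ x : B, wordLength SA g := rfl
      omega
end

section
/- Let X be a finite nonempty set, F(X) the free group on X, and S = X ∪ X⁻¹. Then for all u, v ∈ F(X) and every finite subset H ⊆ F(X), the minimal number of edges of a walk in Cay(F(X),S) from u to v visiting every element of H equals 2·|[u,H] ∖ [u,v]| + |[u,v]|. -/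
open scoped Classical

/-- The Cayley graph of `G` with respect to `S`: an edge between `g` and `g * s` for
each `s ∈ S`. -/
def cayley {G : Type*} [Group G] (S : Set G) : SimpleGraph G :=
  SimpleGraph.fromRel (fun x y => ∃ s ∈ S, y = x * s)

/-- `TS S b b' F`: the minimal number of edges of a walk in the Cayley graph `Cay(G, S)`
from `b` to `b'` that visits every element of `F` (`0` if no such walk exists). -/
noncomputable def TS {G : Type*} [Group G] (S : Set G) (b b' : G) (F : Set G) : ℕ :=
  sInf {n | ∃ w : (cayley S).Walk b b', (∀ x ∈ F, x ∈ w.support) ∧ w.length = n}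

/-- The symmetric generating set `X ∪ X⁻¹` of the free group `F(X)`. -/
def freeGenSet (X : Type*) : Set (FreeGroup X) :=
  {g | ∃ x : X, g = FreeGroup.of x ∨ g = (FreeGroup.of x)⁻¹}

/-- `[u, v]`: the set of edges of the unique geodesic from `u` to `v` in the Cayley
tree of `F(X)` with respect to `X ∪ X⁻¹`; its vertices are `u` multiplied by the
prefixes of the reduced word of `u⁻¹v`. -/
def geodEdges {X : Type*} [DecidableEq X] (u v : FreeGroup X) :
    Set (Sym2 (FreeGroup X)) :=
  {e | ∃ i < (FreeGroup.toWord (u⁻¹ * v)).length,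
    e = s(u * FreeGroup.mk ((FreeGroup.toWord (u⁻¹ * v)).take i),
          u * FreeGroup.mk ((FreeGroup.toWord (u⁻¹ * v)).take (i + 1)))}

/-- `[u, H]`: the union of the geodesic edge sets `[u, h]` over `h ∈ H`. -/
def geodUnion {X : Type*} [DecidableEq X] (u : FreeGroup X) (H : Set (FreeGroup X)) :
    Set (Sym2 (FreeGroup X)) :=
  ⋃ h ∈ H, geodEdges u h





namespace FGAux

open FreeGroup List

variable {X : Type*} [DecidableEq X]

/-- The no-cancellation relation on letters. -/
def NR (a b : X × Bool) : Prop := ¬(a.1 = b.1 ∧ b.2 = !a.2)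

def Reduced (l : List (X × Bool)) : Prop := FreeGroup.reduce l = l

theorem reduced_iff_no_step {l : List (X × Bool)} :
    Reduced l ↔ ∀ l', ¬ FreeGroup.Red.Step l l' := by
  constructor
  · intro h l' hs
    have h1 : FreeGroup.reduce l = l' := FreeGroup.reduce.min (by rw [h]; exact hs.to_red)
    have h2 := hs.length
    rw [h] at h1
    rw [← h1] at h2
    omega
  · intro h
    have := FreeGroup.reduce.red (L := l)
    unfold FreeGroup.Red at this
    exact (Relation.reflTransGen_iff_eq (fun l' hs => h l' hs)).mp this

theorem reduced_iff_chain {l : List (X × Bool)} :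
    Reduced l ↔ l.Chain' NR := by
  rw [reduced_iff_no_step]
  constructor
  · intro h
    induction l with
    | nil => exact List.isChain_nil
    | cons a t ih =>
      cases t with
      | nil => exact List.isChain_singleton a
      | cons b t2 =>
        simp only [List.Chain', List.isChain_cons_cons]
        constructor
        · rintro ⟨h1, h2⟩
          exact h t2 (by
            have : a = (a.1, a.2) := rfl
            have hb : b = (a.1, !a.2) := by
              rcases b with ⟨b1, b2⟩; simp only at h1 h2; simp [h1.symm, h2]
            rw [hb, this]
            exact (FreeGroup.Red.Step.not (L₁ := []) (L₂ := t2) (x := a.1) (b := a.2)))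
        · apply ih
          intro l' hs
          exact h (a :: l') (FreeGroup.Red.Step.cons hs)
  · intro h l' hs
    cases hs with
    | @not L1 L2 x b =>
      have := (List.isChain_append.mp h).2.1
      rw [List.isChain_cons_cons] at this
      exact this.1 ⟨rfl, rfl⟩

theorem Reduced.infix {l l' : List (X × Bool)} (h : Reduced l) (hi : l' <:+: l) :
    Reduced l' :=
  reduced_iff_chain.mpr ((reduced_iff_chain.mp h).infix hi)

theorem reduced_toWord (x : FreeGroup X) : Reduced (FreeGroup.toWord x) :=
  FreeGroup.reduce_toWord x

theorem toWord_mk_reduced {l : List (X × Bool)} (h : Reduced l) :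
    FreeGroup.toWord (FreeGroup.mk l) = l := by
  rw [FreeGroup.toWord_mk]; exact h

theorem norm_mk_reduced {l : List (X × Bool)} (h : Reduced l) :
    FreeGroup.norm (FreeGroup.mk l) = l.length := by
  unfold FreeGroup.norm
  rw [toWord_mk_reduced h]

theorem reduced_of_norm_eq {l : List (X × Bool)} (h : FreeGroup.norm (FreeGroup.mk l) = l.length) :
    Reduced l := by
  unfold FreeGroup.norm at h
  rw [FreeGroup.toWord_mk] at h
  exact (FreeGroup.reduce.red.sublist).eq_of_length h

end FGAux



namespace FGAux
open FreeGroup List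
variable {X : Type*} [DecidableEq X]

/-- Tree distance on the free group. -/
def d (x y : FreeGroup X) : ℕ := FreeGroup.norm (x⁻¹ * y)

theorem d_self (x : FreeGroup X) : d x x = 0 := by simp [d, FreeGroup.norm_one]

theorem d_eq_zero_iff {x y : FreeGroup X} : d x y = 0 ↔ x = y := by
  rw [d, FreeGroup.norm_eq_zero, inv_mul_eq_one]

theorem d_symm (x y : FreeGroup X) : d x y = d y x := by
  rw [d, d, ← FreeGroup.norm_inv_eq, mul_inv_rev, inv_inv]

theorem d_triangle (x y z : FreeGroup X) : d x z ≤ d x y + d y z := by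
  have : x⁻¹ * z = (x⁻¹ * y) * (y⁻¹ * z) := by group
  rw [d, this]
  exact FreeGroup.norm_mul_le _ _

theorem d_mul_left (g x y : FreeGroup X) : d (g * x) (g * y) = d x y := by
  unfold d
  congr 1
  group

/-- Parity homomorphism. -/
noncomputable def eps : FreeGroup X →* Multiplicative (ZMod 2) :=
  FreeGroup.lift (fun _ => Multiplicative.ofAdd 1)

theorem eps_mk (l : List (X × Bool)) :
    eps (FreeGroup.mk l) = Multiplicative.ofAdd (l.length : ZMod 2) := by
  rw [eps, FreeGroup.lift_mk]
  induction l with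
  | nil => simp
  | cons a t ih =>
    simp only [List.map_cons, List.prod_cons, ih, List.length_cons]
    rcases a with ⟨a1, b⟩
    have hneg : (-1 : ZMod 2) = 1 := by decide
    cases b <;> simp only [cond_true, cond_false, ← ofAdd_add, ← ofAdd_neg] <;>
      · congr 1
        push_cast
        try rw [hneg]
        exact add_comm _ _

theorem eps_eq_norm (x : FreeGroup X) :
    eps x = Multiplicative.ofAdd ((FreeGroup.norm x : ZMod 2)) := by
  conv_lhs => rw [← FreeGroup.mk_toWord (x := x)]
  rw [eps_mk]
  rfl

theorem d_parity (x y z : FreeGroup X) :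
    ((d x z : ZMod 2)) = (d x y : ZMod 2) + (d y z : ZMod 2) := by
  have h : (x⁻¹ * z) = (x⁻¹ * y) * (y⁻¹ * z) := by group
  have h2 : eps (x⁻¹ * z) = eps (x⁻¹ * y) * eps (y⁻¹ * z) := by rw [h, MonoidHom.map_mul]
  rw [eps_eq_norm, eps_eq_norm, eps_eq_norm, ← ofAdd_add] at h2
  have := Multiplicative.ofAdd.injective h2
  exact this

/-- For adjacent `p q`, every point is strictly closer to exactly one of them. -/
theorem adj_dist {p q : FreeGroup X} (h : d p q = 1) (x : FreeGroup X) :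
    d q x = d p x + 1 ∨ d p x = d q x + 1 := by
  have hne : d p x ≠ d q x := by
    intro he
    have hp := d_parity p q x
    rw [h, ← he] at hp
    have : ((1 : ℕ) : ZMod 2) = 0 := by
      have := add_right_cancel (a := ((1:ℕ) : ZMod 2)) (b := (d p x : ZMod 2)) (c := 0)
        (by rw [zero_add, ← hp])
      exact this
    simp at this
  have h1 : d p x ≤ 1 + d q x := by have := d_triangle p q x; omega
  have h2 : d q x ≤ 1 + d p x := by
    have := d_triangle q p x; rw [d_symm q p, h] at this; omega
  omega

end FGAux

namespace FGAux
open FreeGroup List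
variable {X : Type*} [DecidableEq X]



theorem d_eq_len (u v : FreeGroup X) : d u v = (FreeGroup.toWord (u⁻¹ * v)).length := rfl

/-- The `i`-th vertex of the geodesic from `u` to `v`. -/
def pfx (u v : FreeGroup X) (i : ℕ) : FreeGroup X :=
  u * FreeGroup.mk ((FreeGroup.toWord (u⁻¹ * v)).take i)

/-- The `i`-th edge of the geodesic from `u` to `v`. -/
def edg (u v : FreeGroup X) (i : ℕ) : Sym2 (FreeGroup X) :=
  s(pfx u v i, pfx u v (i + 1))

theorem mem_geodEdges_iff {e : Sym2 (FreeGroup X)} {u v : FreeGroup X} :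
    e ∈ geodEdges u v ↔ ∃ i < d u v, e = edg u v i := Iff.rfl

theorem take_reduced (x : FreeGroup X) (i : ℕ) : Reduced ((FreeGroup.toWord x).take i) :=
  (reduced_toWord x).infix (List.take_prefix _ _).isInfix

theorem drop_reduced (x : FreeGroup X) (i : ℕ) : Reduced ((FreeGroup.toWord x).drop i) :=
  (reduced_toWord x).infix (List.drop_suffix _ _).isInfix

theorem pfx_d {u v : FreeGroup X} {i : ℕ} (h : i ≤ d u v) : d u (pfx u v i) = i := by
  unfold pfx d
  rw [show u⁻¹ * (u * FreeGroup.mk ((FreeGroup.toWord (u⁻¹ * v)).take i))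
      = FreeGroup.mk ((FreeGroup.toWord (u⁻¹ * v)).take i) by group]
  rw [norm_mk_reduced (take_reduced _ _), List.length_take]
  rw [d_eq_len] at h
  omega

theorem pfx_zero (u v : FreeGroup X) : pfx u v 0 = u := by
  unfold pfx
  rw [List.take_zero, show FreeGroup.mk ([] : List (X × Bool)) = 1 from rfl, mul_one]

theorem pfx_last {u v : FreeGroup X} {i : ℕ} (h : d u v ≤ i) : pfx u v i = v := by
  unfold pfx
  rw [d_eq_len] at h
  rw [List.take_of_length_le h, FreeGroup.mk_toWord]
  group

theorem pfx_inv_mul (u v : FreeGroup X) (i : ℕ) :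
    (pfx u v i)⁻¹ * v = FreeGroup.mk ((FreeGroup.toWord (u⁻¹ * v)).drop i) := by
  unfold pfx
  set w := FreeGroup.toWord (u⁻¹ * v) with hw
  have h : FreeGroup.mk (w.take i) * FreeGroup.mk (w.drop i) = u⁻¹ * v := by
    rw [FreeGroup.mul_mk, List.take_append_drop, hw, FreeGroup.mk_toWord]
  have h2 : (u * FreeGroup.mk (w.take i))⁻¹ * v
      = (FreeGroup.mk (w.take i))⁻¹ * (u⁻¹ * v) := by group
  rw [h2, ← h]
  group

theorem pfx_d_right {u v : FreeGroup X} (i : ℕ) : d (pfx u v i) v = d u v - i := by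
  unfold d
  rw [pfx_inv_mul, norm_mk_reduced (drop_reduced _ _), List.length_drop]
  rfl

theorem pfx_adj {u v : FreeGroup X} {i : ℕ} (h : i < d u v) :
    d (pfx u v i) (pfx u v (i + 1)) = 1 := by
  unfold d pfx
  rw [d_eq_len] at h
  have hg : (FreeGroup.toWord (u⁻¹ * v))[i]? =
      some ((FreeGroup.toWord (u⁻¹ * v)).get ⟨i, h⟩) := List.getElem?_eq_getElem h
  rw [show (u * FreeGroup.mk ((FreeGroup.toWord (u⁻¹ * v)).take i))⁻¹ *
      (u * FreeGroup.mk ((FreeGroup.toWord (u⁻¹ * v)).take (i+1)))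
      = (FreeGroup.mk ((FreeGroup.toWord (u⁻¹ * v)).take i))⁻¹ *
        FreeGroup.mk ((FreeGroup.toWord (u⁻¹ * v)).take (i+1)) by group]
  rw [List.take_succ, hg]
  rw [show ((FreeGroup.toWord (u⁻¹ * v)).take i ++
      (some ((FreeGroup.toWord (u⁻¹ * v)).get ⟨i, h⟩)).toList) =
      (FreeGroup.toWord (u⁻¹ * v)).take i ++ [(FreeGroup.toWord (u⁻¹ * v)).get ⟨i, h⟩] from rfl]
  rw [← FreeGroup.mul_mk]
  rw [show (FreeGroup.mk ((FreeGroup.toWord (u⁻¹ * v)).take i))⁻¹ *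
      (FreeGroup.mk ((FreeGroup.toWord (u⁻¹ * v)).take i) *
        FreeGroup.mk [(FreeGroup.toWord (u⁻¹ * v)).get ⟨i, h⟩])
      = FreeGroup.mk [(FreeGroup.toWord (u⁻¹ * v)).get ⟨i, h⟩] by group]
  rw [norm_mk_reduced]
  · rfl
  · show FreeGroup.reduce _ = _
    exact FreeGroup.reduce_singleton _

theorem pfx_cancel {u v : FreeGroup X} {i k : ℕ} (hi : i ≤ d u v) (hk : k ≤ d u v)
    (h : pfx u v i = pfx u v k) : i = k := by
  have := pfx_d (u := u) (v := v) hi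
  rw [h, pfx_d hk] at this
  omega

theorem edg_inj {u v : FreeGroup X} {i k : ℕ} (hi : i < d u v) (hk : k < d u v)
    (h : edg u v i = edg u v k) : i = k := by
  unfold edg at h
  rw [Sym2.eq_iff] at h
  rcases h with ⟨h1, _⟩ | ⟨h1, h2⟩
  · exact pfx_cancel (by omega) (by omega) h1
  · have e1 := pfx_cancel (u := u) (v := v) (by omega : i ≤ d u v) (by omega) h1
    have e2 := pfx_cancel (u := u) (v := v) (by omega : i + 1 ≤ d u v) (by omega) h2
    omega

end FGAux

namespace Core
variable {X : Type*} [DecidableEq X]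
open FreeGroup List FGAux

theorem mem_geod_of_sides {p q u v : FreeGroup X} (hpq : d p q = 1)
    (hu : d u p + 1 = d u q) (hv : d v q + 1 = d v p) :
    s(p, q) ∈ geodEdges u v := by
  classical
  -- the letter joining p to q
  obtain ⟨ℓ, hℓ⟩ : ∃ ℓ, FreeGroup.toWord (p⁻¹ * q) = [ℓ] := List.length_eq_one_iff.mp hpq
  have hq : q = p * FreeGroup.mk [ℓ] := by
    rw [← hℓ, FreeGroup.mk_toWord]; group
  set pg := FreeGroup.toWord (u⁻¹ * p) with hpg
  have hgp : FreeGroup.mk pg = u⁻¹ * p := FreeGroup.mk_toWord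
  set wp := FreeGroup.toWord (p⁻¹ * v) with hwp
  have hmkwp : FreeGroup.mk wp = p⁻¹ * v := FreeGroup.mk_toWord
  have hi : d u p = pg.length := rfl
  have hm : d p v = wp.length := rfl
  have hredpg : Reduced pg := reduced_toWord _
  have hredwp : Reduced wp := reduced_toWord _
  clear_value pg wp
  -- u⁻¹ q = mk (pg ++ [ℓ]) is reduced
  have huq : u⁻¹ * q = FreeGroup.mk (pg ++ [ℓ]) := by
    rw [hq, ← FreeGroup.mul_mk, hgp]; group
  have hred1 : Reduced (pg ++ [ℓ]) := by
    apply reduced_of_norm_eq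
    rw [← huq]
    have : FreeGroup.norm (u⁻¹ * q) = d u q := rfl
    rw [this, ← hu, List.length_append, List.length_singleton, hi]
  -- q⁻¹ v = mk ((ℓ.1, !ℓ.2) :: wp), not reduced
  have hqv : q⁻¹ * v = FreeGroup.mk ((ℓ.1, !ℓ.2) :: wp) := by
    rw [hq, show ((ℓ.1, !ℓ.2) :: wp) = FreeGroup.invRev [ℓ] ++ wp by
      simp [FreeGroup.invRev]]
    rw [← FreeGroup.mul_mk, ← FreeGroup.inv_mk, hmkwp]
    group
  have hnotred : ¬ Reduced ((ℓ.1, !ℓ.2) :: wp) := by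
    intro hr
    have h1 : FreeGroup.norm (q⁻¹ * v) = wp.length + 1 := by
      rw [hqv, norm_mk_reduced hr, List.length_cons]
    have h2 : FreeGroup.norm (q⁻¹ * v) = d q v := rfl
    have h3 : d q v = d v q := d_symm _ _
    have h4 : d p v = d v p := d_symm _ _
    omega
  -- hence wp starts with ℓ
  obtain ⟨t, ht⟩ : ∃ t, wp = ℓ :: t := by
    rcases wp with _ | ⟨y, t⟩
    · exact absurd (reduced_iff_chain.mpr (List.isChain_singleton _)) hnotred
    · refine ⟨t, ?_⟩
      have hchain : ¬ List.Chain' NR ((ℓ.1, !ℓ.2) :: y :: t) := fun hc =>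
        hnotred (reduced_iff_chain.mpr hc)
      simp only [List.Chain', List.isChain_cons_cons] at hchain
      push_neg at hchain
      have hnr : ¬ NR (ℓ.1, !ℓ.2) y := by
        intro hnr
        exact hchain hnr (reduced_iff_chain.mp hredwp)
      unfold NR at hnr
      rw [not_not] at hnr
      obtain ⟨e1, e2⟩ := hnr
      have hy : y = ℓ := by
        rcases y with ⟨y1, y2⟩
        rcases ℓ with ⟨l1, l2⟩
        simp only at e1 e2
        simp [← e1, e2, Bool.not_not]
      rw [hy]
  -- pg ++ wp is reduced
  have hred2 : Reduced (pg ++ wp) := by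
    rw [reduced_iff_chain]; simp only [List.Chain', List.isChain_append]
    refine ⟨reduced_iff_chain.mp hredpg, reduced_iff_chain.mp hredwp, ?_⟩
    intro x hx y hy
    rw [ht] at hy
    simp only [List.head?_cons, Option.mem_def, Option.some.injEq] at hy
    subst hy
    have := reduced_iff_chain.mp hred1
    simp only [List.Chain', List.isChain_append] at this
    exact this.2.2 x hx ℓ (by simp)
  -- identify the reduced word of u⁻¹v
  have huv : FreeGroup.toWord (u⁻¹ * v) = pg ++ wp := by
    have : u⁻¹ * v = FreeGroup.mk (pg ++ wp) := by
      rw [← FreeGroup.mul_mk, hgp, hmkwp]; group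
    rw [this, toWord_mk_reduced hred2]
  -- produce the witness index
  refine ⟨pg.length, ?_, ?_⟩
  · rw [huv, List.length_append, ht, List.length_cons]; omega
  · rw [huv, List.take_left' rfl]
    have htk : (pg ++ wp).take (pg.length + 1) = pg ++ [ℓ] := by
      rw [List.take_add, List.take_left' rfl, List.drop_left' rfl, ht]
      rfl
    rw [htk, ← FreeGroup.mul_mk, hgp]
    rw [Sym2.eq_iff]
    left
    constructor
    · group
    · rw [hq]; group

end Core

namespace Core2
variable {X : Type*} [DecidableEq X]
open FreeGroup List FGAux Core

theorem mem_geod_iff_sides {p q u v : FreeGroup X} (hpq : d p q = 1) :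
    s(p, q) ∈ geodEdges u v ↔ (d u p < d u q ↔ d v q < d v p) := by
  constructor
  · rintro ⟨i, hiL, he⟩
    rw [← d_eq_len] at hiL
    rw [show (s(u * FreeGroup.mk ((FreeGroup.toWord (u⁻¹ * v)).take i),
        u * FreeGroup.mk ((FreeGroup.toWord (u⁻¹ * v)).take (i + 1)))) = edg u v i from rfl] at he
    unfold edg at he
    rw [Sym2.eq_iff] at he
    have d1 : d u (pfx u v i) = i := pfx_d (by omega)
    have d2 : d u (pfx u v (i+1)) = i + 1 := pfx_d (by omega)
    have d3 : d (pfx u v i) v = d u v - i := pfx_d_right i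
    have d4 : d (pfx u v (i+1)) v = d u v - (i+1) := pfx_d_right (i+1)
    rcases he with ⟨h1, h2⟩ | ⟨h1, h2⟩
    · subst h1; subst h2
      rw [d_symm v _, d_symm v _]
      constructor <;> intro _ <;> omega
    · subst h1; subst h2
      rw [d_symm v _, d_symm v _]
      constructor <;> intro h <;> omega
  · intro hside
    have hadju := adj_dist hpq u
    have hadjv := adj_dist hpq v
    rw [d_symm q u, d_symm p u] at hadju
    rw [d_symm q v, d_symm p v] at hadjv
    by_cases hcu : d u p < d u q
    · have hcv : d v q < d v p := hside.mp hcu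
      exact mem_geod_of_sides hpq (by omega) (by omega)
    · have hcv : ¬ d v q < d v p := fun h => hcu (hside.mpr h)
      have := mem_geod_of_sides (p := q) (q := p) (by rw [d_symm]; exact hpq)
        (u := u) (v := v) (by omega) (by omega)
      rwa [Sym2.eq_swap] at this

theorem exists_adj_of_mem {e : Sym2 (FreeGroup X)} {u v : FreeGroup X}
    (h : e ∈ geodEdges u v) : ∃ p q : FreeGroup X, d p q = 1 ∧ e = s(p, q) := by
  obtain ⟨i, hiL, he⟩ := h
  rw [← d_eq_len] at hiL
  exact ⟨pfx u v i, pfx u v (i+1), pfx_adj hiL, he⟩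

/-- The fundamental cut ("XOR") property of geodesic edge sets in the tree. -/
theorem geod_xor (e : Sym2 (FreeGroup X)) (a b c : FreeGroup X) :
    e ∈ geodEdges a c ↔ ¬(e ∈ geodEdges a b ↔ e ∈ geodEdges b c) := by
  by_cases hE : ∃ p q : FreeGroup X, d p q = 1 ∧ e = s(p, q)
  · obtain ⟨p, q, h1, rfl⟩ := hE
    rw [mem_geod_iff_sides h1, mem_geod_iff_sides h1, mem_geod_iff_sides h1]
    have ha := adj_dist h1 a
    have hb := adj_dist h1 b
    have hc := adj_dist h1 c
    rw [d_symm q a, d_symm p a] at ha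
    rw [d_symm q b, d_symm p b] at hb
    rw [d_symm q c, d_symm p c] at hc
    rcases ha with ha | ha <;> rcases hb with hb | hb <;> rcases hc with hc | hc <;> omega
  · have h1 : e ∉ geodEdges a c := fun h => hE (exists_adj_of_mem h)
    have h2 : e ∉ geodEdges a b := fun h => hE (exists_adj_of_mem h)
    have h3 : e ∉ geodEdges b c := fun h => hE (exists_adj_of_mem h)
    tauto

theorem geodEdges_self (a : FreeGroup X) : geodEdges a a = ∅ := by
  ext e
  simp only [Set.mem_empty_iff_false, iff_false]
  rintro ⟨i, hiL, _⟩
  rw [← d_eq_len, d_self] at hiL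
  omega

theorem geodEdges_adj {a b : FreeGroup X} (h : d a b = 1) :
    geodEdges a b = {s(a, b)} := by
  ext e
  rw [show (e ∈ geodEdges a b) ↔ ∃ i < d a b, e = edg a b i from mem_geodEdges_iff]
  rw [h]
  constructor
  · rintro ⟨i, hi, rfl⟩
    interval_cases i
    have : edg a b 0 = s(a, b) := by
      unfold edg
      rw [pfx_zero, pfx_last (by omega)]
    rw [this]; rfl
  · intro he
    refine ⟨0, by omega, ?_⟩
    rw [Set.mem_singleton_iff.mp he]
    unfold edg
    rw [pfx_zero, pfx_last (by omega)]

end Core2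

namespace Core3
variable {X : Type*} [DecidableEq X]
open FreeGroup List FGAux Core Core2 SimpleGraph

theorem mem_freeGenSet_iff {s : FreeGroup X} :
    s ∈ freeGenSet X ↔ FreeGroup.norm s = 1 := by
  constructor
  · rintro ⟨x, rfl | rfl⟩
    · exact FreeGroup.norm_of x
    · rw [FreeGroup.norm_inv_eq]; exact FreeGroup.norm_of x
  · intro h
    obtain ⟨⟨a, b⟩, hab⟩ := List.length_eq_one_iff.mp h
    have hs : s = FreeGroup.mk [(a, b)] := by rw [← hab, FreeGroup.mk_toWord]
    refine ⟨a, ?_⟩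
    cases b
    · right
      rw [hs]
      rfl
    · left
      rw [hs]
      rfl

theorem cayley_adj {x y : FreeGroup X} :
    (cayley (freeGenSet X)).Adj x y ↔ d x y = 1 := by
  constructor
  · rintro ⟨hne, ⟨s, hs, rfl⟩ | ⟨s, hs, rfl⟩⟩
    · show FreeGroup.norm (x⁻¹ * (x * s)) = 1
      rw [show x⁻¹ * (x * s) = s by group]
      exact mem_freeGenSet_iff.mp hs
    · show FreeGroup.norm ((y * s)⁻¹ * y) = 1
      rw [show (y * s)⁻¹ * y = s⁻¹ by group, FreeGroup.norm_inv_eq]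
      exact mem_freeGenSet_iff.mp hs
  · intro h
    refine ⟨fun he => by rw [he, d_self] at h; omega, ?_⟩
    left
    refine ⟨x⁻¹ * y, mem_freeGenSet_iff.mpr h, by group⟩

theorem mem_edges_of_mem_geod {a b : FreeGroup X} (w : (cayley (freeGenSet X)).Walk a b)
    {e : Sym2 (FreeGroup X)} (h : e ∈ geodEdges a b) : e ∈ w.edges := by
  induction w with
  | nil => rw [geodEdges_self] at h; exact absurd h (Set.notMem_empty e)
  | @cons a c b hadj w' ih =>
    have hac : geodEdges a c = {s(a, c)} := geodEdges_adj (cayley_adj.mp hadj)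
    rw [SimpleGraph.Walk.edges_cons, List.mem_cons]
    by_cases hec : e ∈ geodEdges c b
    · right; exact ih hec
    · left
      have := (geod_xor e a c b).mp h
      have hm : e ∈ geodEdges a c := by tauto
      rw [hac] at hm
      exact hm

theorem one_le_count {a b : FreeGroup X} (w : (cayley (freeGenSet X)).Walk a b)
    {e : Sym2 (FreeGroup X)} (h : e ∈ geodEdges a b) : 1 ≤ w.edges.count e :=
  List.count_pos_iff.mpr (mem_edges_of_mem_geod w h)

theorem two_le_count {a b h : FreeGroup X} (w : (cayley (freeGenSet X)).Walk a b)
    {e : Sym2 (FreeGroup X)} (hh : h ∈ w.support) (he : e ∈ geodEdges a h)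
    (hne : e ∉ geodEdges a b) : 2 ≤ w.edges.count e := by
  have hsplit := w.take_spec hh
  have hedges : w.edges = (w.takeUntil h hh).edges ++ (w.dropUntil h hh).edges := by
    conv_lhs => rw [← hsplit]
    exact SimpleGraph.Walk.edges_append _ _
  have h1 : 1 ≤ (w.takeUntil h hh).edges.count e := one_le_count _ he
  have h2 : 1 ≤ (w.dropUntil h hh).edges.count e := by
    apply one_le_count
    have hx := geod_xor e a h b
    tauto
  rw [hedges, List.count_append]
  omega

theorem sum_count_le {β : Type*} [DecidableEq β] (l : List β) (s : Finset β) :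
    ∑ e ∈ s, l.count e ≤ l.length := by
  induction l with
  | nil => simp
  | cons x t ih =>
    have hstep : ∀ e : β, (x :: t).count e = t.count e + if e = x then 1 else 0 := by
      intro e
      rw [List.count_cons]
      simp only [beq_iff_eq]
      by_cases hxe : e = x
      · simp [hxe]
      · rw [if_neg hxe, if_neg (fun h => hxe (Eq.symm h))]
    calc ∑ e ∈ s, (x :: t).count e
        = (∑ e ∈ s, t.count e) + ∑ e ∈ s, (if e = x then 1 else 0) := by
          rw [← Finset.sum_add_distrib]
          exact Finset.sum_congr rfl fun e _ => hstep e
      _ ≤ t.length + 1 := by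
          have : (∑ e ∈ s, (if e = x then 1 else 0)) = if x ∈ s then 1 else 0 :=
            Finset.sum_ite_eq' s x (fun _ => 1)
          rw [this]
          have := ih
          split <;> omega
      _ = (x :: t).length := by rw [List.length_cons]

end Core3

namespace Core4
variable {X : Type*} [DecidableEq X]
open FreeGroup List FGAux Core Core2 Core3 SimpleGraph

theorem geodEdges_eq_image (u v : FreeGroup X) :
    geodEdges u v = edg u v '' Set.Iio (d u v) := by
  ext e
  rw [show (e ∈ geodEdges u v) ↔ ∃ i < d u v, e = edg u v i from mem_geodEdges_iff]
  constructor
  · rintro ⟨i, hi, rfl⟩; exact ⟨i, hi, rfl⟩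
  · rintro ⟨i, hi, rfl⟩; exact ⟨i, hi, rfl⟩

theorem geodEdges_finite (u v : FreeGroup X) : (geodEdges u v).Finite := by
  rw [geodEdges_eq_image]; exact (Set.finite_Iio _).image _

theorem geodEdges_ncard (u v : FreeGroup X) : (geodEdges u v).ncard = d u v := by
  rw [geodEdges_eq_image]
  have hinj : Set.InjOn (edg u v) (Set.Iio (d u v)) := fun i hi k hk h => edg_inj hi hk h
  rw [Set.ncard_image_of_injOn hinj, ← Finset.coe_Iio, Set.ncard_coe_finset, Nat.card_Iio]

theorem geodUnion_finite (u : FreeGroup X) (H : Finset (FreeGroup X)) :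
    (geodUnion u (↑H : Set (FreeGroup X))).Finite :=
  Set.Finite.biUnion H.finite_toSet (fun h _ => geodEdges_finite u h)

theorem mem_geodUnion {u : FreeGroup X} {H : Set (FreeGroup X)} {e : Sym2 (FreeGroup X)} :
    e ∈ geodUnion u H ↔ ∃ h ∈ H, e ∈ geodEdges u h := by
  unfold geodUnion
  simp

theorem walk_lower (u v : FreeGroup X) (H : Finset (FreeGroup X))
    (w : (cayley (freeGenSet X)).Walk u v) (hcov : ∀ h ∈ (↑H : Set (FreeGroup X)), h ∈ w.support) :
    2 * ((geodUnion u (↑H : Set (FreeGroup X)) \ geodEdges u v).ncard) +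
      (geodEdges u v).ncard ≤ w.length := by
  have hAfin : (geodUnion u (↑H : Set (FreeGroup X)) \ geodEdges u v).Finite :=
    (geodUnion_finite u H).diff
  have hBfin := geodEdges_finite u v
  set A := hAfin.toFinset with hA
  set B := hBfin.toFinset with hB
  have hdisj : Disjoint A B := by
    rw [Finset.disjoint_left]
    intro e heA heB
    rw [hA, Set.Finite.mem_toFinset] at heA
    rw [hB, Set.Finite.mem_toFinset] at heB
    exact heA.2 heB
  have hsum : ∑ e ∈ A ∪ B, w.edges.count e ≤ w.length := by
    rw [← SimpleGraph.Walk.length_edges]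
    exact sum_count_le _ _
  rw [Finset.sum_union hdisj] at hsum
  have hA2 : ∀ e ∈ A, 2 ≤ w.edges.count e := by
    intro e heA
    rw [hA, Set.Finite.mem_toFinset] at heA
    obtain ⟨h, hh, he⟩ := mem_geodUnion.mp heA.1
    exact two_le_count w (hcov h hh) he heA.2
  have hB1 : ∀ e ∈ B, 1 ≤ w.edges.count e := by
    intro e heB
    rw [hB, Set.Finite.mem_toFinset] at heB
    exact one_le_count w heB
  have hApart : A.card • 2 ≤ ∑ e ∈ A, w.edges.count e :=
    Finset.card_nsmul_le_sum A _ 2 hA2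
  have hBpart : B.card • 1 ≤ ∑ e ∈ B, w.edges.count e :=
    Finset.card_nsmul_le_sum B _ 1 hB1
  have hcards : (geodUnion u (↑H : Set (FreeGroup X)) \ geodEdges u v).ncard = A.card ∧
      (geodEdges u v).ncard = B.card :=
    ⟨Set.ncard_eq_toFinset_card _ hAfin, Set.ncard_eq_toFinset_card _ hBfin⟩
  rw [smul_eq_mul] at hApart hBpart
  omega

end Core4

namespace Core5
variable {X : Type*} [DecidableEq X]
open FreeGroup List FGAux Core Core2 Core3 Core4 SimpleGraph

theorem exists_geo_walk : ∀ (n : ℕ) (x y : FreeGroup X), d x y = n →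
    ∃ w : (cayley (freeGenSet X)).Walk x y, w.length = n ∧ ∀ i : ℕ, pfx x y i ∈ w.support := by
  intro n
  induction n with
  | zero =>
    intro x y h
    obtain rfl : x = y := d_eq_zero_iff.mp h
    refine ⟨SimpleGraph.Walk.nil, rfl, ?_⟩
    intro i
    have : pfx x x i = x := by
      unfold pfx
      rw [show x⁻¹ * x = 1 by group, FreeGroup.toWord_one, List.take_nil]
      rw [show FreeGroup.mk ([] : List (X × Bool)) = 1 from rfl, mul_one]
    rw [this]
    exact SimpleGraph.Walk.start_mem_support _
  | succ n ih =>
    intro x y h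
    obtain ⟨ℓ, t, hw⟩ : ∃ ℓ t, FreeGroup.toWord (x⁻¹ * y) = ℓ :: t := by
      have : FreeGroup.toWord (x⁻¹ * y) ≠ [] := by
        intro hnil
        have : d x y = 0 := by rw [d_eq_len, hnil]; rfl
        omega
      rcases hq : FreeGroup.toWord (x⁻¹ * y) with _ | ⟨a, b⟩
      · exact absurd hq this
      · exact ⟨a, b, rfl⟩
    set x' := x * FreeGroup.mk [ℓ] with hx'
    have hredt : Reduced t := by
      have := reduced_toWord (x⁻¹ * y)
      rw [hw, reduced_iff_chain] at this; simp only [List.Chain', List.isChain_cons] at this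
      exact reduced_iff_chain.mpr this.2
    have hxy : x⁻¹ * y = FreeGroup.mk [ℓ] * FreeGroup.mk t := by
      rw [FreeGroup.mul_mk, show [ℓ] ++ t = ℓ :: t from rfl, ← hw, FreeGroup.mk_toWord]
    have hx'y : x'⁻¹ * y = FreeGroup.mk t := by
      rw [hx', show (x * FreeGroup.mk [ℓ])⁻¹ * y = (FreeGroup.mk [ℓ])⁻¹ * (x⁻¹ * y) by group,
        hxy]
      group
    have htt : FreeGroup.toWord (x'⁻¹ * y) = t := by rw [hx'y, toWord_mk_reduced hredt]
    have hd1 : d x x' = 1 := by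
      show FreeGroup.norm (x⁻¹ * (x * FreeGroup.mk [ℓ])) = 1
      rw [show x⁻¹ * (x * FreeGroup.mk [ℓ]) = FreeGroup.mk [ℓ] by group]
      rw [norm_mk_reduced (show Reduced [ℓ] from FreeGroup.reduce_singleton ℓ)]
      rfl
    have hdn : d x' y = n := by
      rw [d_eq_len, htt]
      have : d x y = (ℓ :: t).length := by rw [d_eq_len, hw]
      rw [List.length_cons] at this
      omega
    obtain ⟨w', hlen, hsup⟩ := ih x' y hdn
    refine ⟨SimpleGraph.Walk.cons (cayley_adj.mpr hd1) w', ?_, ?_⟩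
    · rw [SimpleGraph.Walk.length_cons, hlen]
    · intro i
      rw [SimpleGraph.Walk.support_cons, List.mem_cons]
      cases i with
      | zero => left; exact pfx_zero x y
      | succ i' =>
        right
        have : pfx x y (i' + 1) = pfx x' y i' := by
          unfold pfx
          rw [hw, htt, List.take_succ_cons, show ℓ :: t.take i' = [ℓ] ++ t.take i' from rfl,
            ← FreeGroup.mul_mk, hx']
          group
        rw [this]
        exact hsup i'

end Core5

namespace Core6
variable {X : Type*} [DecidableEq X]
open FreeGroup List FGAux Core Core2 Core3 Core4 Core5 SimpleGraph

theorem pfx_eq_of_take_eq {u a b : FreeGroup X} {i : ℕ}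
    (h : (FreeGroup.toWord (u⁻¹ * a)).take i = (FreeGroup.toWord (u⁻¹ * b)).take i) :
    pfx u a i = pfx u b i := by
  unfold pfx
  rw [h]

theorem edg_mem_geod_iff {u a b : FreeGroup X} {i : ℕ} (hi : i < d u a) :
    edg u a i ∈ geodEdges u b ↔ i < d u b ∧
      (FreeGroup.toWord (u⁻¹ * a)).take (i + 1) = (FreeGroup.toWord (u⁻¹ * b)).take (i + 1) := by
  constructor
  · intro hm
    obtain ⟨k, hk, he⟩ := mem_geodEdges_iff.mp hm
    unfold edg at he
    rw [Sym2.eq_iff] at he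
    rcases he with ⟨h1, h2⟩ | ⟨h1, h2⟩
    · have hik : i = k := by
        have e1 : d u (pfx u a i) = i := pfx_d (by omega)
        rw [h1, pfx_d (by omega)] at e1
        omega
      subst hik
      refine ⟨hk, ?_⟩
      have : FreeGroup.mk ((FreeGroup.toWord (u⁻¹ * a)).take (i+1)) =
          FreeGroup.mk ((FreeGroup.toWord (u⁻¹ * b)).take (i+1)) := by
        have := h2
        unfold pfx at this
        exact mul_left_cancel this
      have := congrArg FreeGroup.toWord this
      rwa [toWord_mk_reduced (take_reduced _ _), toWord_mk_reduced (take_reduced _ _)] at this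
    · exfalso
      have e1 : d u (pfx u a i) = i := pfx_d (by omega)
      rw [h1, pfx_d (by omega)] at e1
      have e2 : d u (pfx u a (i+1)) = i + 1 := pfx_d (by omega)
      rw [h2, pfx_d (by omega)] at e2
      omega
  · rintro ⟨hib, htake⟩
    refine mem_geodEdges_iff.mpr ⟨i, hib, ?_⟩
    unfold edg
    have ht : (FreeGroup.toWord (u⁻¹ * a)).take i = (FreeGroup.toWord (u⁻¹ * b)).take i := by
      have := congrArg (List.take i) htake
      rw [List.take_take, List.take_take] at this
      rwa [show i ⊓ (i + 1) = i by omega] at this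
    rw [pfx_eq_of_take_eq ht, pfx_eq_of_take_eq htake]

theorem pfx_pfx (u h : FreeGroup X) (j i : ℕ) :
    pfx (pfx u h j) h i = pfx u h (j + i) := by
  have h1 : (pfx u h j)⁻¹ * h = FreeGroup.mk ((FreeGroup.toWord (u⁻¹ * h)).drop j) :=
    pfx_inv_mul u h j
  have h2 : FreeGroup.toWord ((pfx u h j)⁻¹ * h) = (FreeGroup.toWord (u⁻¹ * h)).drop j := by
    rw [h1, toWord_mk_reduced (drop_reduced _ _)]
  show pfx u h j * FreeGroup.mk ((FreeGroup.toWord ((pfx u h j)⁻¹ * h)).take i) = _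
  rw [h2]
  show u * FreeGroup.mk ((FreeGroup.toWord (u⁻¹ * h)).take j) * _ =
    u * FreeGroup.mk ((FreeGroup.toWord (u⁻¹ * h)).take (j + i))
  rw [mul_assoc, FreeGroup.mul_mk, ← List.take_add]

end Core6

namespace Core7
variable {X : Type*} [DecidableEq X]
open FreeGroup List FGAux Core Core2 Core3 Core4 Core5 Core6 SimpleGraph

theorem geodUnion_mono {u : FreeGroup X} {H H' : Set (FreeGroup X)} (h : H ⊆ H') :
    geodUnion u H ⊆ geodUnion u H' := by
  intro e he
  obtain ⟨b, hb, hbe⟩ := mem_geodUnion.mp he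
  exact mem_geodUnion.mpr ⟨b, h hb, hbe⟩

theorem exists_good_walk (u v : FreeGroup X) (H : Finset (FreeGroup X)) :
    ∃ w : (cayley (freeGenSet X)).Walk u v,
      w.length = 2 * ((geodUnion u (↑H : Set (FreeGroup X)) \ geodEdges u v).ncard) +
        (geodEdges u v).ncard ∧
      ∀ b ∈ insert v H, ∀ i : ℕ, pfx u b i ∈ w.support := by
  classical
  induction H using Finset.induction_on with
  | empty =>
    obtain ⟨w, hlen, hsup⟩ := exists_geo_walk (d u v) u v rfl
    refine ⟨w, ?_, ?_⟩
    · have h0 : geodUnion u (↑(∅ : Finset (FreeGroup X)) : Set (FreeGroup X)) = ∅ := by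
        unfold geodUnion; simp
      rw [h0, Set.empty_diff, Set.ncard_empty, mul_zero, zero_add, geodEdges_ncard, hlen]
    · intro b hb i
      rw [Finset.mem_insert] at hb
      rcases hb with rfl | hb
      · exact hsup i
      · simp at hb
  | @insert h H hnotin ih =>
    obtain ⟨w, hlen, hsup⟩ := ih
    set L := d u h with hL
    set old := geodUnion u (↑(insert v H) : Set (FreeGroup X)) with hold
    -- the first index whose geodesic edge towards h is new
    have hPex : ∃ k, k = L ∨ edg u h k ∉ old := ⟨L, Or.inl rfl⟩
    set j := Nat.find hPex with hj
    have hjL : j ≤ L := Nat.find_le (Or.inl rfl)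
    have hjold : ∀ k < j, k < L ∧ edg u h k ∈ old := by
      intro k hk
      have := Nat.find_min hPex hk
      push_neg at this
      constructor
      · have := this.1; omega
      · exact this.2
    have hjnew : ∀ k, j ≤ k → k < L → edg u h k ∉ old := by
      intro k hk hkL hmem
      obtain ⟨b, hb, hbe⟩ := mem_geodUnion.mp hmem
      rw [edg_mem_geod_iff hkL] at hbe
      by_cases hjL' : j = L
      · omega
      · have hjlt : j < L := by omega
        have hjb : edg u h j ∈ geodEdges u b := by
          rw [edg_mem_geod_iff hjlt]
          refine ⟨by omega, ?_⟩
          have := congrArg (List.take (j+1)) hbe.2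
          rw [List.take_take, List.take_take, show (j+1) ⊓ (k+1) = j + 1 by omega] at this
          exact this
        have hspec := Nat.find_spec hPex
        rw [← hj] at hspec
        rcases hspec with h1 | h1
        · omega
        · exact h1 (mem_geodUnion.mpr ⟨b, hb, hjb⟩)
    -- the attachment point is in the support of the old walk
    have hm : pfx u h j ∈ w.support := by
      rcases Nat.eq_zero_or_pos j with hj0 | hjpos
      · rw [hj0, pfx_zero]
        exact SimpleGraph.Walk.start_mem_support w
      · obtain ⟨hkL, hkold⟩ := hjold (j-1) (by omega)
        obtain ⟨b, hb, hbe⟩ := mem_geodUnion.mp hkold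
        rw [edg_mem_geod_iff hkL] at hbe
        have : pfx u h j = pfx u b j := by
          apply pfx_eq_of_take_eq
          rw [show j = (j-1) + 1 by omega]
          exact hbe.2
        rw [this]
        exact hsup b (by rwa [← Finset.mem_coe]) j
    -- the detour
    have hdmh : d (pfx u h j) h = L - j := pfx_d_right j
    obtain ⟨g1, hg1len, hg1sup⟩ := exists_geo_walk (L - j) (pfx u h j) h hdmh
    have hg1sup' : ∀ i : ℕ, pfx u h (j + i) ∈ g1.support := by
      intro i
      rw [← pfx_pfx u h j i]
      exact hg1sup i
    set det := g1.append g1.reverse with hdet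
    set w2 := (w.takeUntil _ hm).append (det.append (w.dropUntil _ hm)) with hw2
    have hsupw2 : ∀ x : FreeGroup X, (x ∈ w.support ∨ x ∈ g1.support) → x ∈ w2.support := by
      intro x hx
      rw [hw2, SimpleGraph.Walk.mem_support_append_iff,
        SimpleGraph.Walk.mem_support_append_iff]
      rcases hx with hx | hx
      · conv at hx => rw [← w.take_spec hm]
        rw [SimpleGraph.Walk.mem_support_append_iff] at hx
        tauto
      · have : x ∈ det.support := by
          rw [hdet, SimpleGraph.Walk.mem_support_append_iff]
          exact Or.inl hx
        tauto
    have hw2len : w2.length = w.length + 2 * (L - j) := by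
      rw [hw2, SimpleGraph.Walk.length_append, SimpleGraph.Walk.length_append,
        hdet, SimpleGraph.Walk.length_append, SimpleGraph.Walk.length_reverse, hg1len]
      have : (w.takeUntil _ hm).length + (w.dropUntil _ hm).length = w.length := by
        have := congrArg SimpleGraph.Walk.length (w.take_spec hm)
        rwa [SimpleGraph.Walk.length_append] at this
      omega
    -- cardinality bookkeeping
    have hncard : (geodUnion u (↑(insert h H) : Set (FreeGroup X)) \ geodEdges u v).ncard =
        (geodUnion u (↑H : Set (FreeGroup X)) \ geodEdges u v).ncard + (L - j) := by
      set N := edg u h '' Set.Ico j L with hN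
      have hvold : geodEdges u v ⊆ old := by
        intro e he
        exact mem_geodUnion.mpr ⟨v, by simp, he⟩
      have hHold : geodUnion u (↑H : Set (FreeGroup X)) ⊆ old := by
        apply geodUnion_mono
        intro b hb
        simp only [Finset.coe_insert, Set.mem_insert_iff]
        exact Or.inr hb
      have hseteq : geodUnion u (↑(insert h H) : Set (FreeGroup X)) \ geodEdges u v =
          (geodUnion u (↑H : Set (FreeGroup X)) \ geodEdges u v) ∪ N := by
        ext e
        constructor
        · rintro ⟨hin, hnv⟩
          obtain ⟨b, hb, hbe⟩ := mem_geodUnion.mp hin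
          rw [Finset.mem_coe, Finset.mem_insert] at hb
          rcases hb with rfl | hb
          · -- b = h
            obtain ⟨k, hk, rfl⟩ := mem_geodEdges_iff.mp hbe
            rcases lt_or_ge k j with hkj | hkj
            · obtain ⟨hkL, hkold⟩ := hjold k hkj
              obtain ⟨b', hb', hbe'⟩ := mem_geodUnion.mp hkold
              rw [Finset.mem_coe, Finset.mem_insert] at hb'
              rcases hb' with rfl | hb'
              · exact absurd hbe' hnv
              · exact Or.inl ⟨mem_geodUnion.mpr ⟨b', hb', hbe'⟩, hnv⟩
            · exact Or.inr ⟨k, ⟨hkj, hk⟩, rfl⟩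
          · exact Or.inl ⟨mem_geodUnion.mpr ⟨b, hb, hbe⟩, hnv⟩
        · rintro (⟨hg, hnv⟩ | ⟨k, ⟨hjk, hkL⟩, rfl⟩)
          · refine ⟨?_, hnv⟩
            apply geodUnion_mono ?_ hg
            intro b hb
            rw [Finset.mem_coe] at hb
            rw [Finset.mem_coe]
            exact Finset.mem_insert_of_mem hb
          · refine ⟨mem_geodUnion.mpr ⟨h, by simp, mem_geodEdges_iff.mpr ⟨k, hkL, rfl⟩⟩, ?_⟩
            intro hv'
            exact hjnew k hjk hkL (hvold hv')
      have hdisj : Disjoint (geodUnion u (↑H : Set (FreeGroup X)) \ geodEdges u v) N := by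
        rw [Set.disjoint_left]
        rintro e ⟨hg, _⟩ ⟨k, ⟨hjk, hkL⟩, rfl⟩
        exact hjnew k hjk hkL (hHold hg)
      have hNfin : N.Finite := (Set.finite_Ico j L).image _
      have hNcard : N.ncard = L - j := by
        have hinj : Set.InjOn (edg u h) (Set.Ico j L) := fun a ha b hb he =>
          edg_inj ha.2 hb.2 he
        rw [hN, Set.ncard_image_of_injOn hinj, ← Finset.coe_Ico, Set.ncard_coe_finset,
          Nat.card_Ico]
      rw [hseteq, Set.ncard_union_eq hdisj ((geodUnion_finite u H).diff) hNfin, hNcard]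
    refine ⟨w2, ?_, ?_⟩
    · rw [hw2len, hlen, hncard]; ring
    · intro b hb i
      rw [Finset.mem_insert] at hb
      rcases hb with rfl | hb
      · -- b = v
        exact hsupw2 _ (Or.inl (hsup b (Finset.mem_insert_self b H) i))
      · rw [Finset.mem_insert] at hb
        rcases hb with rfl | hb
        · -- b = h
          rcases le_or_gt j i with hji | hij
          · apply hsupw2 _ (Or.inr ?_)
            rw [show i = j + (i - j) by omega]
            exact hg1sup' (i - j)
          · obtain ⟨hkL, hkold⟩ := hjold i hij
            obtain ⟨b', hb', hbe⟩ := mem_geodUnion.mp hkold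
            rw [edg_mem_geod_iff hkL] at hbe
            have heq : pfx u b i = pfx u b' i := by
              apply pfx_eq_of_take_eq
              have := congrArg (List.take i) hbe.2
              rw [List.take_take, List.take_take, show i ⊓ (i+1) = i by omega] at this
              exact this
            rw [heq]
            exact hsupw2 _ (Or.inl (hsup b' (by rwa [← Finset.mem_coe]) i))
        · exact hsupw2 _ (Or.inl (hsup b (Finset.mem_insert_of_mem hb) i))

end Core7


/-- In the Cayley tree of the free group `F(X)` with respect to `S = X ∪ X⁻¹`, the
minimal length of a walk from `u` to `v` visiting every element of a finite set `H`
equals `2·|[u,H] \ [u,v]| + |[u,v]|`. -/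
theorem freeGroup_TS_eq {X : Type*} [DecidableEq X] [Fintype X] [Nonempty X]
    (u v : FreeGroup X) (H : Finset (FreeGroup X)) :
    TS (freeGenSet X) u v (↑H : Set (FreeGroup X)) =
      2 * ((geodUnion u (↑H : Set (FreeGroup X))) \ geodEdges u v).ncard +
        (geodEdges u v).ncard := by
  classical
  obtain ⟨w, hlen, hsup⟩ := Core7.exists_good_walk u v H
  have hcov : ∀ x ∈ (↑H : Set (FreeGroup X)), x ∈ w.support := by
    intro x hx
    have := hsup x (Finset.mem_insert_of_mem (by rwa [← Finset.mem_coe])) (FGAux.d u x)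
    rwa [FGAux.pfx_last (le_refl _)] at this
  have hmem : 2 * ((geodUnion u (↑H : Set (FreeGroup X))) \ geodEdges u v).ncard +
      (geodEdges u v).ncard ∈
      {n | ∃ w : (cayley (freeGenSet X)).Walk u v,
        (∀ x ∈ (↑H : Set (FreeGroup X)), x ∈ w.support) ∧ w.length = n} := ⟨w, hcov, hlen⟩
  apply le_antisymm
  · exact Nat.sInf_le hmem
  · apply le_csInf ⟨_, hmem⟩
    rintro n ⟨w', hc', hl'⟩
    rw [← hl']
    exact Core4.walk_lower u v H w' hc'
end

section
/- For every finite connected graph Γ, the cube Γ³ is Hamiltonian-connected: any two distinct vertices of Γ³ are joined by a Hamiltonian path. -/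
open scoped Classical

namespace SekaninaAux

open SimpleGraph

variable {V : Type*}

/-- Restriction of a graph to a vertex set. -/
def Gres (T : SimpleGraph V) (A : Set V) : SimpleGraph V where
  Adj x y := T.Adj x y ∧ x ∈ A ∧ y ∈ A
  symm := ⟨fun _ _ ⟨h, hx, hy⟩ => ⟨h.symm, hy, hx⟩⟩
  loopless := ⟨fun x h => h.1.ne rfl⟩

lemma Gres_le (T : SimpleGraph V) (A : Set V) : Gres T A ≤ T := fun _ _ h => h.1

/-- The "short walk" relation. -/
def R3 (T : SimpleGraph V) (x y : V) : Prop := x ≠ y ∧ ∃ w : T.Walk x y, w.length ≤ 3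

lemma R3_mono {T1 T2 : SimpleGraph V} (h : T1 ≤ T2) {x y : V} (hr : R3 T1 x y) : R3 T2 x y := by
  obtain ⟨hne, w, hw⟩ := hr
  exact ⟨hne, w.mapLe h, by rwa [SimpleGraph.Walk.length_map]⟩

noncomputable def m [Fintype V] (T : SimpleGraph V) : ℕ :=
  (Finset.univ.filter fun p : V × V => T.Adj p.1 p.2).card

lemma m_mono [Fintype V] {T1 T2 : SimpleGraph V} (h : T1 ≤ T2) : m T1 ≤ m T2 := by
  apply Finset.card_le_card
  intro p hp
  simp only [Finset.mem_filter, Finset.mem_univ, true_and] at hp ⊢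
  exact h hp

lemma m_lt [Fintype V] {T : SimpleGraph V} {u b : V} (h : T.Adj u b) :
    m (T.deleteEdges {s(u, b)}) < m T := by
  apply Finset.card_lt_card
  constructor
  · intro p hp
    simp only [Finset.mem_filter, Finset.mem_univ, true_and,
      SimpleGraph.deleteEdges_adj] at hp ⊢
    exact hp.1
  · intro hsub
    have := hsub (by simp [h] : (u, b) ∈ Finset.univ.filter fun p : V × V => T.Adj p.1 p.2)
    simp [SimpleGraph.deleteEdges_adj] at this

lemma support_subset_S {T : SimpleGraph V} {S : Finset V}
    (hTS : ∀ x y, T.Adj x y → x ∈ S ∧ y ∈ S) {x y : V} (w : T.Walk x y) (hx : x ∈ S) :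
    ∀ z ∈ w.support, z ∈ S := by
  induction w with
  | nil =>
    intro z hz
    simp only [SimpleGraph.Walk.support_nil, List.mem_singleton] at hz
    subst hz; exact hx
  | cons h p ih =>
    intro z hz
    rw [SimpleGraph.Walk.support_cons] at hz
    rcases List.mem_cons.mp hz with hz | hz
    · exact hz ▸ hx
    · exact ih ((hTS _ _ h).2) z hz

lemma reach_Gres {T : SimpleGraph V} {A : Set V} {x y : V} (w : T.Walk x y)
    (hw : ∀ z ∈ w.support, z ∈ A) : (Gres T A).Reachable x y := by
  induction w with
  | nil => exact SimpleGraph.Reachable.refl _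
  | cons h p ih =>
    refine (SimpleGraph.Adj.reachable ?_).trans (ih fun z hz => hw z ?_)
    · exact ⟨h, hw _ (by simp), hw _ (by simp [SimpleGraph.Walk.support_cons])⟩
    · simp [SimpleGraph.Walk.support_cons, hz]

lemma reach_split_gen {T : SimpleGraph V} (E : Set (Sym2 V)) {u b : V}
    (hE : ∀ e ∈ E, e = s(u, b)) :
    ∀ {x y : V}, T.Walk x y →
      (T.deleteEdges E).Reachable x y ∨ (T.deleteEdges E).Reachable x u ∨
        (T.deleteEdges E).Reachable x b := by
  intro x y w
  induction w with
  | nil => exact Or.inl (SimpleGraph.Reachable.refl _)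
  | @cons a c _ h p ih =>
    by_cases hc : s(a, c) ∈ E
    · have := hE _ hc
      rw [Sym2.eq_iff] at this
      rcases this with ⟨rfl, rfl⟩ | ⟨rfl, rfl⟩
      · exact Or.inr (Or.inl (SimpleGraph.Reachable.refl _))
      · exact Or.inr (Or.inr (SimpleGraph.Reachable.refl _))
    · have hadj : (T.deleteEdges E).Adj a c := by
        rw [SimpleGraph.deleteEdges_adj]
        exact ⟨h, hc⟩
      rcases ih with h' | h' | h'
      · exact Or.inl (hadj.reachable.trans h')
      · exact Or.inr (Or.inl (hadj.reachable.trans h'))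
      · exact Or.inr (Or.inr (hadj.reachable.trans h'))

lemma reach_split {T : SimpleGraph V} {u b x : V} (hx : T.Reachable x u) :
    (T.deleteEdges {s(u, b)}).Reachable x u ∨ (T.deleteEdges {s(u, b)}).Reachable x b := by
  obtain ⟨w⟩ := hx
  rcases reach_split_gen {s(u, b)} (fun e he => he) w with h | h | h
  · exact Or.inl h
  · exact Or.inl h
  · exact Or.inr h

lemma reach_transfer_gen {T : SimpleGraph V} (E : Set (Sym2 V)) {u b : V}
    (hE : ∀ e ∈ E, e = s(u, b)) (hub : (T.deleteEdges E).Reachable u b) :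
    ∀ {x y : V}, T.Walk x y → (T.deleteEdges E).Reachable x y := by
  intro x y w
  induction w with
  | nil => exact SimpleGraph.Reachable.refl _
  | @cons a c _ h p ih =>
    by_cases hc : s(a, c) ∈ E
    · have := hE _ hc
      rw [Sym2.eq_iff] at this
      rcases this with ⟨rfl, rfl⟩ | ⟨rfl, rfl⟩
      · exact hub.trans ih
      · exact hub.symm.trans ih
    · have hadj : (T.deleteEdges E).Adj a c := by
        rw [SimpleGraph.deleteEdges_adj]
        exact ⟨h, hc⟩
      exact hadj.reachable.trans ih

lemma reach_transfer {T : SimpleGraph V} {u b x y : V}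
    (hub : (T.deleteEdges {s(u, b)}).Reachable u b) (h : T.Reachable x y) :
    (T.deleteEdges {s(u, b)}).Reachable x y := by
  obtain ⟨w⟩ := h
  exact reach_transfer_gen {s(u, b)} (fun e he => he) hub w

lemma exists_nbr {T : SimpleGraph V} {u x : V} (h : T.Reachable u x) (hne : u ≠ x) :
    ∃ w, T.Adj u w := by
  obtain ⟨p⟩ := h
  cases p with
  | nil => exact absurd rfl hne
  | cons h _ => exact ⟨_, h⟩

lemma walk_of_chain {H : SimpleGraph V} :
    ∀ (l : List V) (u : V), List.Chain' H.Adj (u :: l) →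
      ∃ w : H.Walk u ((u :: l).getLast (List.cons_ne_nil u l)), w.support = u :: l := by
  intro l
  induction l with
  | nil => intro u _; exact ⟨SimpleGraph.Walk.nil, rfl⟩
  | cons a l ih =>
    intro u hc
    replace hc := List.isChain_cons_cons.mp hc
    obtain ⟨w, hw⟩ := ih a hc.2
    have hg : (u :: a :: l).getLast (List.cons_ne_nil _ _)
        = (a :: l).getLast (List.cons_ne_nil _ _) := List.getLast_cons (List.cons_ne_nil _ _)
    refine ⟨(SimpleGraph.Walk.cons hc.1 w).copy rfl hg.symm, ?_⟩
    rw [SimpleGraph.Walk.support_copy, SimpleGraph.Walk.support_cons, hw]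


lemma main [Fintype V] : ∀ (n : ℕ) (T : SimpleGraph V) (S : Finset V), m T ≤ n →
    (∀ x y, T.Adj x y → x ∈ S ∧ y ∈ S) →
    (∀ x ∈ S, ∀ y ∈ S, T.Reachable x y) →
    ∀ u v : V, u ∈ S → v ∈ S → u ≠ v →
    ∃ l : List V, List.Chain' (R3 T) l ∧ l.head? = some u ∧ l.getLast? = some v ∧
      l.Nodup ∧ ∀ x, x ∈ l ↔ x ∈ S := by
  intro n
  induction n using Nat.strong_induction_on with
  | _ n ih =>
  intro T S hm hTS hconn u v hu hv huv
  obtain ⟨w0'⟩ := hconn u hu v hv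
  obtain ⟨w0, hw0⟩ : ∃ w : T.Walk u v, w.IsPath := ⟨w0'.toPath.1, w0'.toPath.2⟩
  clear w0'
  cases w0 with
  | nil => exact absurd rfl huv
  | @cons _ b _ hadj t =>
    rw [SimpleGraph.Walk.cons_isPath_iff] at hw0
    by_cases hub : (T.deleteEdges {s(u, b)}).Reachable u b
    · -- non-bridge case : delete the edge and recurse
      have hTS' : ∀ x y, (T.deleteEdges {s(u, b)}).Adj x y → x ∈ S ∧ y ∈ S := by
        intro x y hxy
        rw [SimpleGraph.deleteEdges_adj] at hxy
        exact hTS x y hxy.1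
      have hconn' : ∀ x ∈ S, ∀ y ∈ S, (T.deleteEdges {s(u, b)}).Reachable x y :=
        fun x hx y hy => reach_transfer hub (hconn x hx y hy)
      have hmlt : m (T.deleteEdges {s(u, b)}) < n := lt_of_lt_of_le (m_lt hadj) hm
      obtain ⟨l, hc, hh, hl, hnd, hmem⟩ :=
        ih _ hmlt (T.deleteEdges {s(u, b)}) S le_rfl hTS' hconn' u v hu hv huv
      exact ⟨l, hc.imp (fun a b => R3_mono (SimpleGraph.deleteEdges_le _)), hh, hl, hnd, hmem⟩
    · -- bridge case : split
      set T' := T.deleteEdges {s(u, b)} with hT'def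
      have hTS' : ∀ x y, T'.Adj x y → x ∈ S ∧ y ∈ S := by
        intro x y hxy
        rw [hT'def, SimpleGraph.deleteEdges_adj] at hxy
        exact hTS x y hxy.1
      have hbu : ¬ T'.Reachable b u := fun hr => hub hr.symm
      have hbS : b ∈ S := (hTS u b hadj).2
      set S1 := S.filter (fun x => T'.Reachable x u) with hS1def
      set S2 := S.filter (fun x => ¬ T'.Reachable x u) with hS2def
      have hu1 : u ∈ S1 := Finset.mem_filter.mpr ⟨hu, SimpleGraph.Reachable.refl u⟩
      have hb2 : b ∈ S2 := Finset.mem_filter.mpr ⟨hbS, hbu⟩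
      have htbv : T'.Reachable b v := by
        refine ⟨t.toDeleteEdges {s(u, b)} ?_⟩
        intro e he
        simp only [Set.mem_singleton_iff]
        rintro rfl
        exact hw0.2 (SimpleGraph.Walk.fst_mem_support_of_mem_edges t he)
      have hv2 : v ∈ S2 := Finset.mem_filter.mpr ⟨hv, fun hr => hbu (htbv.trans hr)⟩
      set T1 := Gres T' (fun x => x ∈ S1) with hT1def
      set T2 := Gres T' (fun x => x ∈ S2) with hT2def
      have hT1le : T1 ≤ T := le_trans (Gres_le _ _) (SimpleGraph.deleteEdges_le _)
      have hT2le : T2 ≤ T := le_trans (Gres_le _ _) (SimpleGraph.deleteEdges_le _)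
      have hTS1 : ∀ x y, T1.Adj x y → x ∈ S1 ∧ y ∈ S1 := fun x y h => ⟨h.2.1, h.2.2⟩
      have hTS2 : ∀ x y, T2.Adj x y → x ∈ S2 ∧ y ∈ S2 := fun x y h => ⟨h.2.1, h.2.2⟩
      have key1 : ∀ x ∈ S1, T1.Reachable x u := by
        intro x hx
        obtain ⟨hxS, hr⟩ := Finset.mem_filter.mp hx
        obtain ⟨w⟩ := hr
        refine reach_Gres w ?_
        intro z hz
        have hzS : z ∈ S := support_subset_S hTS' w hxS z hz
        exact Finset.mem_filter.mpr ⟨hzS, ⟨w.dropUntil z hz⟩⟩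
      have hconn1 : ∀ x ∈ S1, ∀ y ∈ S1, T1.Reachable x y :=
        fun x hx y hy => (key1 x hx).trans (key1 y hy).symm
      have key2 : ∀ x ∈ S2, T2.Reachable x b := by
        intro x hx
        obtain ⟨hxS, hnr⟩ := Finset.mem_filter.mp hx
        rcases reach_split (b := b) (hconn x hxS u hu) with h' | h'
        · exact absurd h' hnr
        · obtain ⟨w⟩ := h'
          refine reach_Gres w ?_
          intro z hz
          have hzS : z ∈ S := support_subset_S hTS' w hxS z hz
          refine Finset.mem_filter.mpr ⟨hzS, fun hzu => ?_⟩
          have hzb : T'.Reachable z b := ⟨w.dropUntil z hz⟩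
          exact hbu (hzb.symm.trans hzu)
      have hconn2 : ∀ x ∈ S2, ∀ y ∈ S2, T2.Reachable x y :=
        fun x hx y hy => (key2 x hx).trans (key2 y hy).symm
      have hm1 : m T1 < n := lt_of_le_of_lt (m_mono (Gres_le _ _)) (lt_of_lt_of_le (m_lt hadj) hm)
      have hm2 : m T2 < n := lt_of_le_of_lt (m_mono (Gres_le _ _)) (lt_of_lt_of_le (m_lt hadj) hm)
      have hdisj : ∀ x, x ∈ S1 → x ∈ S2 → False :=
        fun x h1 h2 => (Finset.mem_filter.mp h2).2 (Finset.mem_filter.mp h1).2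
      have hunion : ∀ x, x ∈ S ↔ (x ∈ S1 ∨ x ∈ S2) := by
        intro x
        constructor
        · intro hx
          by_cases h : T'.Reachable x u
          · exact Or.inl (Finset.mem_filter.mpr ⟨hx, h⟩)
          · exact Or.inr (Finset.mem_filter.mpr ⟨hx, h⟩)
        · rintro (h | h) <;> exact (Finset.mem_filter.mp h).1
      have part1 : ∃ (l1 : List V) (w1 : V), List.Chain' (R3 T) l1 ∧ l1.head? = some u ∧
          l1.getLast? = some w1 ∧ l1.Nodup ∧ (∀ x, x ∈ l1 ↔ x ∈ S1) ∧ w1 ∈ S1 ∧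
          ∃ wk : T.Walk w1 u, wk.length ≤ 1 := by
        by_cases hS1u : ∀ x ∈ S1, x = u
        · refine ⟨[u], u, List.isChain_singleton u, rfl, rfl, List.nodup_singleton u, ?_,
            hu1, SimpleGraph.Walk.nil, by simp⟩
          intro x
          simp only [List.mem_singleton]
          exact ⟨fun hx => hx ▸ hu1, fun hx => hS1u x hx⟩
        · push_neg at hS1u
          obtain ⟨x0, hx0, hx0u⟩ := hS1u
          obtain ⟨w1, hw1adj⟩ := exists_nbr (key1 x0 hx0).symm (Ne.symm hx0u)
          have hw1S : w1 ∈ S1 := (hTS1 _ _ hw1adj).2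
          obtain ⟨l1, hc1, hh1, hl1, hnd1, hmem1⟩ :=
            ih _ hm1 T1 S1 le_rfl hTS1 hconn1 u w1 hu1 hw1S hw1adj.ne
          refine ⟨l1, w1, hc1.imp (fun a b => R3_mono hT1le), hh1, hl1, hnd1, hmem1, hw1S,
            SimpleGraph.Walk.cons (hT1le hw1adj.symm) SimpleGraph.Walk.nil, by simp⟩
      have part2 : ∃ (l2 : List V) (z : V), List.Chain' (R3 T) l2 ∧ l2.head? = some z ∧
          l2.getLast? = some v ∧ l2.Nodup ∧ (∀ x, x ∈ l2 ↔ x ∈ S2) ∧ z ∈ S2 ∧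
          ∃ wk : T.Walk b z, wk.length ≤ 1 := by
        by_cases hbv : b = v
        · subst hbv
          by_cases hS2b : ∀ x ∈ S2, x = b
          · refine ⟨[b], b, List.isChain_singleton b, rfl, rfl, List.nodup_singleton b, ?_,
              hb2, SimpleGraph.Walk.nil, by simp⟩
            intro x
            simp only [List.mem_singleton]
            exact ⟨fun hx => hx ▸ hb2, fun hx => hS2b x hx⟩
          · push_neg at hS2b
            obtain ⟨x0, hx0, hx0b⟩ := hS2b
            obtain ⟨z, hzadj⟩ := exists_nbr (key2 x0 hx0).symm (Ne.symm hx0b)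
            have hzS : z ∈ S2 := (hTS2 _ _ hzadj).2
            obtain ⟨l2, hc2, hh2, hl2, hnd2, hmem2⟩ :=
              ih _ hm2 T2 S2 le_rfl hTS2 hconn2 z b hzS hb2 hzadj.ne.symm
            refine ⟨l2, z, hc2.imp (fun a b => R3_mono hT2le), hh2, hl2, hnd2, hmem2, hzS,
              SimpleGraph.Walk.cons (hT2le hzadj) SimpleGraph.Walk.nil, by simp⟩
        · obtain ⟨l2, hc2, hh2, hl2, hnd2, hmem2⟩ :=
            ih _ hm2 T2 S2 le_rfl hTS2 hconn2 b v hb2 hv2 hbv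
          exact ⟨l2, b, hc2.imp (fun a b => R3_mono hT2le), hh2, hl2, hnd2, hmem2, hb2,
            SimpleGraph.Walk.nil, by simp⟩
      obtain ⟨l1, w1, hc1, hh1, hl1, hnd1, hmem1, hw1S, wk1, hwk1⟩ := part1
      obtain ⟨l2, z, hc2, hh2, hl2, hnd2, hmem2, hzS, wk2, hwk2⟩ := part2
      have hl2ne : l2 ≠ [] := fun h => by simp [h] at hh2
      have hR : R3 T w1 z := by
        refine ⟨fun h => hdisj _ (h ▸ hw1S) hzS,
          wk1.append (SimpleGraph.Walk.cons hadj wk2), ?_⟩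
        rw [SimpleGraph.Walk.length_append, SimpleGraph.Walk.length_cons]
        omega
      refine ⟨l1 ++ l2, ?_, ?_, ?_, ?_, ?_⟩
      · refine List.IsChain.append hc1 hc2 ?_
        intro x hx y hy
        rw [hl1, Option.mem_some_iff] at hx
        rw [hh2, Option.mem_some_iff] at hy
        rw [← hx, ← hy]
        exact hR
      · cases l1 with
        | nil => simp at hh1
        | cons a t1 =>
          simp only [List.head?_cons, Option.some.injEq] at hh1
          simp [hh1]
      · rw [List.getLast?_append_of_ne_nil _ hl2ne]
        exact hl2
      · refine List.Nodup.append hnd1 hnd2 ?_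
        intro a h1 h2
        exact hdisj a ((hmem1 a).mp h1) ((hmem2 a).mp h2)
      · intro x
        rw [List.mem_append, hmem1, hmem2]
        exact (hunion x).symm

end SekaninaAux

/-- The cube `Γ³` of a graph `Γ`: distinct vertices are adjacent iff their distance
in `Γ` is at most `3`. -/
def cubeGraph {V : Type*} (G : SimpleGraph V) : SimpleGraph V where
  Adj x y := x ≠ y ∧ G.dist x y ≤ 3
  symm := ⟨by
    rintro x y ⟨h1, h2⟩
    exact ⟨h1.symm, by rwa [SimpleGraph.dist_comm]⟩⟩
  loopless := ⟨fun x h => h.1 rfl⟩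

/-- The cube of a finite connected graph is Hamiltonian-connected: any two distinct
vertices are joined by a Hamiltonian path in `Γ³`. -/
theorem cubeGraph_hamiltonianConnected {V : Type*} [Fintype V] (G : SimpleGraph V)
    (hG : G.Connected) (u v : V) (huv : u ≠ v) :
    ∃ p : (cubeGraph G).Walk u v, p.IsHamiltonian := by
  obtain ⟨l, hc, hh, hl, hnd, hmem⟩ := SekaninaAux.main (SekaninaAux.m G) G Finset.univ le_rfl
    (fun x y _ => ⟨Finset.mem_univ x, Finset.mem_univ y⟩)
    (fun x _ y _ => hG.preconnected x y) u v (Finset.mem_univ u) (Finset.mem_univ v) huv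
  have hcc : List.Chain' (cubeGraph G).Adj l := by
    refine hc.imp ?_
    rintro a b ⟨hne, w, hw⟩
    exact ⟨hne, le_trans (SimpleGraph.dist_le w) hw⟩
  cases l with
  | nil => simp at hh
  | cons a t =>
    have ha : a = u := by simpa using hh
    subst ha
    obtain ⟨w, hw⟩ := SekaninaAux.walk_of_chain t a hcc
    have hlast : (a :: t).getLast (List.cons_ne_nil _ _) = v := by
      rw [List.getLast?_eq_getLast (List.cons_ne_nil _ _)] at hl
      exact Option.some_injective _ hl
    refine ⟨w.copy rfl hlast, ?_⟩
    apply SimpleGraph.Walk.IsPath.isHamiltonian_of_mem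
    · apply SimpleGraph.Walk.IsPath.mk'
      rw [SimpleGraph.Walk.support_copy, hw]
      exact hnd
    · intro x
      rw [SimpleGraph.Walk.support_copy, hw]
      exact (hmem x).mpr (Finset.mem_univ x)
end

section
/- Let G be a finite nontrivial group with a finite symmetric generating set S_G. If the Cayley graph Cay(G,S_G) is Hamiltonian-connected, or if it is bipartite and Hamiltonian-laceable, then ℋ(G,S_G) ≤ 0. -/
open scoped Classical

/-- The Hamiltonian difference of a finite group `G` with generating set `S`:
the maximum over `g ≠ 1` of `TS(1, g; G)`, minus `TS(1, 1; G)`. -/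
noncomputable def HamDiff (G : Type*) [Group G] (S : Set G) : ℤ :=
  ((sSup {n : ℕ | ∃ g : G, g ≠ 1 ∧ n = TS S 1 g Set.univ} : ℕ) : ℤ) -
    ((TS S 1 1 Set.univ : ℕ) : ℤ)

/-- A graph is Hamiltonian-connected if any two distinct vertices are joined by a
Hamiltonian path. -/
def HamConnected {V : Type*} (G : SimpleGraph V) : Prop :=
  ∀ u v : V, u ≠ v → ∃ p : G.Walk u v, p.IsHamiltonian

/-- A graph is bipartite and Hamiltonian-laceable: it admits a proper `2`-coloring such
that any two vertices of different colors are joined by a Hamiltonian path. -/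
def BipartiteHamLaceable {V : Type*} (G : SimpleGraph V) : Prop :=
  ∃ C : G.Coloring Bool, ∀ u v : V, C u ≠ C v → ∃ p : G.Walk u v, p.IsHamiltonian

/-- If the Cayley graph of a finite nontrivial group `(G, S)` is Hamiltonian-connected,
or bipartite and Hamiltonian-laceable, then `ℋ(G, S) ≤ 0`. -/
theorem hamDiff_nonpos_of_hamConnected_or_laceable {G : Type*} [Group G] [Fintype G]
    [Nontrivial G] (S : Set G) (hS : IsSymmGen S)
    (h : HamConnected (cayley S) ∨ BipartiteHamLaceable (cayley S)) :
    HamDiff G S ≤ 0 := by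
  -- a non-identity generator
  obtain ⟨s, hsS, hs1⟩ : ∃ s ∈ S, s ≠ 1 := by
    by_contra hc
    push_neg at hc
    obtain ⟨x, hx⟩ := exists_ne (1 : G)
    have hxmem : x ∈ Subgroup.closure S := hS.closure_eq_top ▸ Subgroup.mem_top x
    have hle : Subgroup.closure S ≤ ⊥ := by
      rw [Subgroup.closure_le]
      intro t ht
      simp [hc t ht, Subgroup.mem_bot]
    exact hx (Subgroup.mem_bot.mp (hle hxmem))
  have hadj : ∀ g : G, (cayley S).Adj g (g * s) := by
    intro g
    rw [cayley, SimpleGraph.fromRel_adj]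
    exact ⟨fun hgs => hs1 (mul_eq_left.mp hgs.symm), Or.inl ⟨s, hsS, rfl⟩⟩
  -- upper bound for TS 1 g and existence of a hamiltonian walk from 1
  have key : (∀ g : G, g ≠ 1 → TS S 1 g Set.univ ≤ Fintype.card G) ∧
      (∃ v : G, ∃ p : (cayley S).Walk 1 v, p.IsHamiltonian) := by
    rcases h with hc | ⟨C, hC⟩
    · constructor
      · intro g hg
        obtain ⟨p, hp⟩ := hc 1 g (Ne.symm hg)
        calc TS S 1 g Set.univ ≤ p.length :=
              Nat.sInf_le ⟨p, fun x _ => hp.mem_support x, rfl⟩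
          _ ≤ Fintype.card G := by rw [hp.length_eq]; exact Nat.sub_le _ _
      · obtain ⟨g, hg⟩ := exists_ne (1 : G)
        obtain ⟨p, hp⟩ := hc 1 g (Ne.symm hg)
        exact ⟨g, p, hp⟩
    · constructor
      · intro g hg
        by_cases hcol : C 1 = C g
        · -- same colour: go to g * s first
          have hcol' : C 1 ≠ C (g * s) := hcol ▸ C.valid (hadj g)
          obtain ⟨p, hp⟩ := hC 1 (g * s) hcol'
          have hw : TS S 1 g Set.univ ≤ (p.concat (hadj g).symm).length := by
            refine Nat.sInf_le ⟨p.concat (hadj g).symm, fun x _ => ?_, rfl⟩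
            rw [SimpleGraph.Walk.support_concat]
            simp only [List.concat_eq_append, List.mem_append]
            exact Or.inl (hp.mem_support x)
          rw [SimpleGraph.Walk.length_concat, hp.length_eq] at hw
          calc TS S 1 g Set.univ ≤ Fintype.card G - 1 + 1 := hw
            _ = Fintype.card G := Nat.succ_pred_eq_of_pos Fintype.card_pos
            _ ≤ Fintype.card G := le_rfl
        · obtain ⟨p, hp⟩ := hC 1 g hcol
          calc TS S 1 g Set.univ ≤ p.length :=
                Nat.sInf_le ⟨p, fun x _ => hp.mem_support x, rfl⟩
            _ ≤ Fintype.card G := by rw [hp.length_eq]; exact Nat.sub_le _ _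
      · have hcol : C 1 ≠ C (1 * s) := C.valid (hadj 1)
        obtain ⟨p, hp⟩ := hC 1 (1 * s) hcol
        exact ⟨1 * s, p, hp⟩
  obtain ⟨hub, v, p, hp⟩ := key
  -- the set defining TS 1 1 is nonempty
  have hne : {n | ∃ w : (cayley S).Walk 1 1, (∀ x ∈ Set.univ, x ∈ w.support) ∧
      w.length = n}.Nonempty := by
    refine ⟨(p.append p.reverse).length, p.append p.reverse, fun x _ => ?_, rfl⟩
    rw [SimpleGraph.Walk.mem_support_append_iff]
    exact Or.inl (hp.mem_support x)
  -- lower bound: any closed walk through all of G has length ≥ |G|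
  have hlb : Fintype.card G ≤ TS S 1 1 Set.univ := by
    rw [TS]
    refine le_csInf hne ?_
    rintro n ⟨w, hw, rfl⟩
    cases w with
    | nil =>
      exfalso
      obtain ⟨x, hx⟩ := exists_ne (1 : G)
      have := hw x (Set.mem_univ x)
      simp [SimpleGraph.Walk.support_nil] at this
      exact hx this
    | cons ha q =>
      have hnodup : ¬ (SimpleGraph.Walk.cons ha q).support.Nodup := by
        rw [SimpleGraph.Walk.support_cons, List.nodup_cons]
        exact fun hn => hn.1 q.end_mem_support
      set L := (SimpleGraph.Walk.cons ha q).support with hL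
      have h1 : Fintype.card G ≤ L.toFinset.card := by
        refine Finset.card_le_card fun x _ => ?_
        rw [List.mem_toFinset]
        exact hw x (Set.mem_univ x)
      have h2 : L.toFinset.card = L.dedup.length := by
        exact List.card_toFinset L
      have h3 : L.dedup.length < L.length := by
        refine lt_of_le_of_ne (List.Sublist.length_le (List.dedup_sublist L)) fun he => ?_
        exact hnodup (List.dedup_eq_self.mp ((List.dedup_sublist L).eq_of_length he))
      have h4 : L.length = (SimpleGraph.Walk.cons ha q).length + 1 :=
        SimpleGraph.Walk.length_support _
      omega
  -- combine
  rw [HamDiff, sub_nonpos, Int.ofNat_le]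
  by_cases hne' : {n : ℕ | ∃ g : G, g ≠ 1 ∧ n = TS S 1 g Set.univ}.Nonempty
  · refine csSup_le hne' ?_
    rintro n ⟨g, hg, rfl⟩
    exact le_trans (hub g hg) hlb
  · rw [Set.not_nonempty_iff_eq_empty.mp hne']
    simp
end
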